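/- arXiv:2012.07995 — 7 statements merged into one kernel-verified Lean document; each statement's English description precedes it below -/
import Mathlib

section
/- Two Laurent polynomials F, G ∈ ℤ[X,X⁻¹] represent the same element of ℤ² under the evaluation x ↦ F(T)(b), where T = [[0,-1],[1,2k+1]] and b = (0,1), if and only if F - G is divisible by X² - (2k+1)X + 1 in ℤ[X,X⁻¹]. -/
open LaurentPolynomial

/-- Evaluation of a Laurent polynomial at the invertible matrix Tu, as an
algebra homomorphism ℤ[X,X⁻¹] → M₂(ℤ): X ↦ Tu, X⁻¹ ↦ Tu⁻¹. -/
noncomputable def evalT (Tu : (Matrix (Fin 2) (Fin 2) ℤ)ˣ) :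
    LaurentPolynomial ℤ →ₐ[ℤ] Matrix (Fin 2) (Fin 2) ℤ :=
  AddMonoidAlgebra.lift ℤ (Matrix (Fin 2) (Fin 2) ℤ) ℤ
    ((Units.coeHom (Matrix (Fin 2) (Fin 2) ℤ)).comp (zpowersHom _ Tu))

lemma evalT_T (Tu : (Matrix (Fin 2) (Fin 2) ℤ)ˣ) (n : ℤ) :
    evalT Tu (T n) = ((Tu ^ n : (Matrix (Fin 2) (Fin 2) ℤ)ˣ) : Matrix (Fin 2) (Fin 2) ℤ) := by
  show AddMonoidAlgebra.lift ℤ _ ℤ _ (AddMonoidAlgebra.single n (1 : ℤ)) = _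
  rw [AddMonoidAlgebra.lift_single]
  simp

lemma evalT_C (Tu : (Matrix (Fin 2) (Fin 2) ℤ)ˣ) (a : ℤ) :
    evalT Tu (C a) = a • (1 : Matrix (Fin 2) (Fin 2) ℤ) := by
  rw [C_eq_algebraMap, AlgHom.commutes]
  simp [Algebra.algebraMap_eq_smul_one]

/-- Every Laurent polynomial is congruent to a linear one modulo
`T 2 - C (2k+1) * T 1 + 1`. -/
lemma exists_rep (k : ℤ) (H : LaurentPolynomial ℤ) :
    ∃ a b : ℤ, (T 2 - C (2 * k + 1) * T 1 + 1) ∣ (H - (C a + C b * T 1)) := by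
  set P : LaurentPolynomial ℤ := T 2 - C (2 * k + 1) * T 1 + 1 with hP
  have hT2 : (T 2 : LaurentPolynomial ℤ) = T 1 * T 1 := by
    rw [← T_add]; norm_num
  have hTinv : (T (-1) : LaurentPolynomial ℤ) * T 1 = 1 := by
    rw [← T_add]; norm_num
  -- first: for T n
  have key : ∀ n : ℤ, ∃ a b : ℤ, P ∣ (T n - (C a + C b * T 1)) := by
    intro n
    induction n using Int.induction_on with
    | zero =>
      exact ⟨1, 0, by simp⟩
    | succ n ih =>
      obtain ⟨a, b, q, hq⟩ := ih
      refine ⟨-b, a + (2 * k + 1) * b, q * T 1 + C b, ?_⟩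
      have hTn : (T ((n : ℤ) + 1) : LaurentPolynomial ℤ) = T n * T 1 := by
        rw [← T_add]
      rw [hTn, hP] at *
      simp only [map_add, map_mul, map_neg, map_one, map_ofNat] at *
      rw [hT2] at *
      linear_combination (T 1) * hq
    | pred n ih =>
      obtain ⟨a, b, q, hq⟩ := ih
      refine ⟨(2 * k + 1) * a + b, -a, q * T (-1) + C a * T (-1), ?_⟩
      have hTn : (T (-(n : ℤ) - 1) : LaurentPolynomial ℤ) = T (-n) * T (-1) := by
        rw [← T_add]; ring_nf
      rw [hTn, hP] at *
      simp only [map_add, map_mul, map_neg, map_one, map_ofNat] at *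
      rw [hT2] at *
      linear_combination (T (-1)) * hq + (C b - C a * T 1 + (2 * C k + 1) * C a) * hTinv
  -- now extend by induction on H
  induction H using LaurentPolynomial.induction_on with
  | h_C c => exact ⟨c, 0, by simp⟩
  | h_add ihp ihq =>
    obtain ⟨a, b, hab⟩ := ihp
    obtain ⟨a', b', hab'⟩ := ihq
    refine ⟨a + a', b + b', ?_⟩
    have := dvd_add hab hab'
    convert this using 1
    simp only [map_add]
    ring
  | h_C_mul_T n c _ =>
    obtain ⟨a, b, q, hq⟩ := key ((n : ℤ) + 1)
    refine ⟨c * a, c * b, C c * q, ?_⟩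
    simp only [map_mul]
    linear_combination (C c) * hq
  | h_C_mul_T_Z n c _ =>
    obtain ⟨a, b, q, hq⟩ := key (-(n : ℤ) - 1)
    refine ⟨c * a, c * b, C c * q, ?_⟩
    simp only [map_mul]
    linear_combination (C c) * hq

theorem represent_same_iff_divisible (k : ℤ) (hk : 2 ≤ k)
    (Tu : (Matrix (Fin 2) (Fin 2) ℤ)ˣ)
    (hTu : (Tu : Matrix (Fin 2) (Fin 2) ℤ) = !![0, -1; 1, 2 * k + 1])
    (F G : LaurentPolynomial ℤ) :
    (evalT Tu F).mulVec ![0, 1] = (evalT Tu G).mulVec ![0, 1] ↔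
      (T 2 - C (2 * k + 1) * T 1 + 1) ∣ (F - G) := by
  set P : LaurentPolynomial ℤ := T 2 - C (2 * k + 1) * T 1 + 1 with hP
  have hTu2 : ((Tu ^ (2 : ℤ) : (Matrix (Fin 2) (Fin 2) ℤ)ˣ) : Matrix (Fin 2) (Fin 2) ℤ)
      = (Tu : Matrix (Fin 2) (Fin 2) ℤ) * Tu := by
    push_cast
    rw [zpow_two]
  have hevalP : evalT Tu P = 0 := by
    have hs : ((2 * k + 1) : ℤ) • (!![0, -1; 1, 2 * k + 1] : Matrix (Fin 2) (Fin 2) ℤ)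
        = !![0, -(2 * k + 1); 2 * k + 1, (2 * k + 1) * (2 * k + 1)] := by
      ext i j; fin_cases i <;> fin_cases j <;> simp
    rw [hP, map_add, map_sub, map_mul, map_one, evalT_C, evalT_T, evalT_T, zpow_one,
      smul_mul_assoc, one_mul, hTu2, hTu, hs, Matrix.mul_fin_two, Matrix.one_fin_two]
    ext i j
    fin_cases i <;> fin_cases j <;> simp <;> ring
  constructor
  · intro h
    obtain ⟨a, b, q, hq⟩ := exists_rep k (F - G)
    have hFG : F - G = P * q + (C a + C b * T 1) := by linear_combination hq
    have h0 : (evalT Tu (F - G)).mulVec ![0, 1] = 0 := by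
      rw [map_sub, Matrix.sub_mulVec, h, sub_self]
    rw [hFG] at h0
    rw [map_add, map_mul, hevalP, zero_mul, zero_add, map_add, map_mul, evalT_C, evalT_C,
      evalT_T, zpow_one, smul_mul_assoc, one_mul] at h0
    rw [hTu, Matrix.add_mulVec, Matrix.smul_mulVec, Matrix.smul_mulVec,
      Matrix.one_mulVec] at h0
    have hmv : (!![0, -1; 1, 2 * k + 1] : Matrix (Fin 2) (Fin 2) ℤ).mulVec ![0, 1]
        = ![-1, 2 * k + 1] := by
      ext i; fin_cases i <;> simp [Matrix.mulVec, dotProduct, Fin.sum_univ_two]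
    rw [hmv] at h0
    have h1 := congrFun h0 0
    have h2 := congrFun h0 1
    simp [Pi.add_apply, Pi.smul_apply, smul_eq_mul] at h1 h2
    have hb : b = 0 := by linarith
    have ha : a = 0 := by rw [hb] at h2; linarith
    rw [hFG, ha, hb]
    simp
  · rintro ⟨q, hq⟩
    have : evalT Tu (F - G) = 0 := by
      rw [hq, map_mul, hevalP, zero_mul]
    rw [map_sub, sub_eq_zero] at this
    rw [this]
end

section
/- Every element g = (x, tⁿ) of the torus bundle group G = ℤ² ⋊_T ℤ has an n-minimal representative: there exists a Laurent polynomial F ∈ ℤ[X,X⁻¹] with F(T)(b) = x and L_n(F) = ‖g‖_S, where ‖·‖_S is the word length with respect to S = {a,b,t}. -/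
/-- Multiplication in G = ℤ² ⋊_T ℤ: (x,m)(y,n) = (x + Tᵐ y, m + n). -/
def tmul (Tu : (Matrix (Fin 2) (Fin 2) ℤ)ˣ) (g h : (Fin 2 → ℤ) × ℤ) : (Fin 2 → ℤ) × ℤ :=
  (g.1 + ((Tu ^ g.2 : (Matrix (Fin 2) (Fin 2) ℤ)ˣ) : Matrix (Fin 2) (Fin 2) ℤ).mulVec h.1,
    g.2 + h.2)

/-- The generators a, b, t and their inverses. -/
def gens : List ((Fin 2 → ℤ) × ℤ) :=
  [(![1, 0], 0), (![0, 1], 0), ((0 : Fin 2 → ℤ), 1),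
   (![-1, 0], 0), (![0, -1], 0), ((0 : Fin 2 → ℤ), -1)]

/-- Word length with respect to S = {a, b, t}. -/
noncomputable def wlen (Tu : (Matrix (Fin 2) (Fin 2) ℤ)ˣ) (g : (Fin 2 → ℤ) × ℤ) : ℕ :=
  sInf {L : ℕ | ∃ l : List ((Fin 2 → ℤ) × ℤ),
    (∀ x ∈ l, x ∈ gens) ∧ l.foldl (tmul Tu) ((0 : Fin 2 → ℤ), 0) = g ∧ l.length = L}

/-- The element of ℤ² represented by a Laurent polynomial (given by its coefficients):
F(T)(b) = Σ c_j Tʲ(b). -/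
noncomputable def repv (Tu : (Matrix (Fin 2) (Fin 2) ℤ)ˣ) (F : ℤ →₀ ℤ) : Fin 2 → ℤ :=
  F.sum fun j c =>
    c • ((Tu ^ j : (Matrix (Fin 2) (Fin 2) ℤ)ˣ) : Matrix (Fin 2) (Fin 2) ℤ).mulVec ![0, 1]

/-- Normalized q. -/
noncomputable def qdeg (n : ℤ) (F : ℤ →₀ ℤ) : ℤ :=
  max (max 0 n) (F.support.max.unbotD 0)

/-- Normalized p. -/
noncomputable def pdeg (n : ℤ) (F : ℤ →₀ ℤ) : ℤ :=
  max (max 0 (-n)) (-(F.support.min.untopD 0) - 1)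

/-- The n-length. -/
noncomputable def Llen (n : ℤ) (F : ℤ →₀ ℤ) : ℤ :=
  2 * pdeg n F + 2 * qdeg n F - |n| + ∑ j ∈ F.support, |F j|

namespace TBAux

open Finset

abbrev bv : Fin 2 → ℤ := ![0, 1]
abbrev av : Fin 2 → ℤ := ![1, 0]

variable (Tu : (Matrix (Fin 2) (Fin 2) ℤ)ˣ)

/-- T^j as a matrix. -/
def Tm (j : ℤ) : Matrix (Fin 2) (Fin 2) ℤ :=
  ((Tu ^ j : (Matrix (Fin 2) (Fin 2) ℤ)ˣ) : Matrix (Fin 2) (Fin 2) ℤ)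

lemma Tm_zero : Tm Tu 0 = 1 := by simp [Tm]

lemma Tm_mulVec (a b : ℤ) (v : Fin 2 → ℤ) :
    (Tm Tu a).mulVec ((Tm Tu b).mulVec v) = (Tm Tu (a + b)).mulVec v := by
  rw [Matrix.mulVec_mulVec, Tm, Tm, Tm, ← Units.val_mul, ← zpow_add]

lemma mulVec_sum {ι : Type*} (A : Matrix (Fin 2) (Fin 2) ℤ) (s : Finset ι)
    (v : ι → Fin 2 → ℤ) : A.mulVec (∑ i ∈ s, v i) = ∑ i ∈ s, A.mulVec (v i) := by
  have := map_sum A.mulVecLin v s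
  simpa only [Matrix.mulVecLin_apply] using this

lemma repv_eq (F : ℤ →₀ ℤ) :
    repv Tu F = F.sum fun j c => c • (Tm Tu j).mulVec bv := rfl

/-- Evaluation of a word. -/
def E (l : List ((Fin 2 → ℤ) × ℤ)) : (Fin 2 → ℤ) × ℤ :=
  l.foldl (tmul Tu) ((0 : Fin 2 → ℤ), 0)

lemma tmul_fst (g h : (Fin 2 → ℤ) × ℤ) :
    (tmul Tu g h).1 = g.1 + (Tm Tu g.2).mulVec h.1 := rfl

lemma tmul_snd (g h : (Fin 2 → ℤ) × ℤ) : (tmul Tu g h).2 = g.2 + h.2 := rfl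

lemma tmul_zero_left (g : (Fin 2 → ℤ) × ℤ) :
    tmul Tu ((0 : Fin 2 → ℤ), 0) g = g := by
  simp [tmul, Tm, Matrix.one_mulVec]

lemma tmul_assoc (g h k : (Fin 2 → ℤ) × ℤ) :
    tmul Tu (tmul Tu g h) k = tmul Tu g (tmul Tu h k) := by
  unfold tmul
  refine Prod.ext ?_ (by simp [add_assoc])
  show g.1 + _ + _ = g.1 + _
  rw [Matrix.mulVec_add, ← Tm, ← Tm, ← Tm, Tm_mulVec, add_assoc]

lemma foldl_tmul (l : List ((Fin 2 → ℤ) × ℤ)) :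
    ∀ z, l.foldl (tmul Tu) z = tmul Tu z (E Tu l) := by
  induction l with
  | nil =>
      intro z
      show z = tmul Tu z ((0 : Fin 2 → ℤ), 0)
      simp [tmul, Matrix.mulVec_zero]
  | cons g l ih =>
      intro z
      have hE : E Tu (g :: l) = tmul Tu g (E Tu l) := by
        rw [E, List.foldl_cons, tmul_zero_left]; exact ih g
      rw [List.foldl_cons, ih, hE, ← tmul_assoc]

lemma E_cons (g : (Fin 2 → ℤ) × ℤ) (l : List ((Fin 2 → ℤ) × ℤ)) :
    E Tu (g :: l) = tmul Tu g (E Tu l) := by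
  simp only [E, List.foldl_cons, tmul_zero_left]
  exact foldl_tmul Tu l g

lemma E_append (l₁ l₂ : List ((Fin 2 → ℤ) × ℤ)) :
    E Tu (l₁ ++ l₂) = tmul Tu (E Tu l₁) (E Tu l₂) := by
  simp only [E, List.foldl_append]
  exact foldl_tmul Tu l₂ _


/-! ### Support bound helpers -/

lemma le_maxun {s : Finset ℤ} {j : ℤ} (hj : j ∈ s) : j ≤ s.max.unbotD 0 := by
  rw [← Finset.coe_max' ⟨j, hj⟩, WithBot.unbotD_coe]
  exact Finset.le_max' s j hj

lemma minun_le {s : Finset ℤ} {j : ℤ} (hj : j ∈ s) : s.min.untopD 0 ≤ j := by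
  rw [← Finset.coe_min' ⟨j, hj⟩, WithTop.untopD_coe]
  exact Finset.min'_le s j hj

lemma maxun_le {s : Finset ℤ} {c : ℤ} (h0 : 0 ≤ c) (h : ∀ j ∈ s, j ≤ c) :
    s.max.unbotD 0 ≤ c := by
  rcases s.eq_empty_or_nonempty with rfl | hs
  · simpa using h0
  · rw [← Finset.coe_max' hs, WithBot.unbotD_coe]
    exact Finset.max'_le s hs c h

lemma le_minun {s : Finset ℤ} {c : ℤ} (h0 : c ≤ 0) (h : ∀ j ∈ s, c ≤ j) :
    c ≤ s.min.untopD 0 := by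
  rcases s.eq_empty_or_nonempty with rfl | hs
  · simpa using h0
  · rw [← Finset.coe_min' hs, WithTop.untopD_coe]
    exact Finset.le_min' s hs c h

lemma qdeg_nonneg (n : ℤ) (F : ℤ →₀ ℤ) : 0 ≤ qdeg n F :=
  le_trans (le_max_left 0 n) (le_max_left _ _)

lemma le_qdeg (n : ℤ) (F : ℤ →₀ ℤ) : n ≤ qdeg n F :=
  le_trans (le_max_right 0 n) (le_max_left _ _)

lemma pdeg_nonneg (n : ℤ) (F : ℤ →₀ ℤ) : 0 ≤ pdeg n F :=
  le_trans (le_max_left 0 (-n)) (le_max_left _ _)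

lemma neg_le_pdeg (n : ℤ) (F : ℤ →₀ ℤ) : -n ≤ pdeg n F :=
  le_trans (le_max_right 0 (-n)) (le_max_left _ _)

lemma mem_le_qdeg {n : ℤ} {F : ℤ →₀ ℤ} {j : ℤ} (hj : j ∈ F.support) :
    j ≤ qdeg n F :=
  le_trans (le_maxun hj) (le_max_right _ _)

lemma pdeg_le_mem {n : ℤ} {F : ℤ →₀ ℤ} {j : ℤ} (hj : j ∈ F.support) :
    -(pdeg n F) - 1 ≤ j := by
  have h1 : -(F.support.min.untopD 0) - 1 ≤ pdeg n F := le_max_right _ _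
  have h2 := minun_le hj
  omega

/-! ### Shifts -/

def sh (c : ℤ) (F : ℤ →₀ ℤ) : ℤ →₀ ℤ := Finsupp.equivMapDomain (Equiv.addRight c) F

lemma sh_apply (c : ℤ) (F : ℤ →₀ ℤ) (a : ℤ) : sh c F a = F (a - c) := by
  simp [sh, Finsupp.equivMapDomain_apply, sub_eq_add_neg]

lemma sh_support (c : ℤ) (F : ℤ →₀ ℤ) :
    (sh c F).support = F.support.image (· + c) := by
  classical
  rw [sh, Finsupp.equivMapDomain_eq_mapDomain, Equiv.coe_addRight,
    Finsupp.mapDomain_support_of_injective (add_left_injective c)]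

lemma sh_zero (c : ℤ) : sh c (0 : ℤ →₀ ℤ) = 0 := by
  ext a; simp [sh_apply]

lemma repv_sh (c : ℤ) (F : ℤ →₀ ℤ) :
    repv Tu (sh c F) = (Tm Tu c).mulVec (repv Tu F) := by
  rw [repv_eq, repv_eq, sh, Finsupp.sum_equivMapDomain]
  rw [Finsupp.sum, Finsupp.sum, mulVec_sum]
  refine Finset.sum_congr rfl fun j _ => ?_
  rw [Matrix.mulVec_smul, Tm_mulVec]
  simp [Equiv.coe_addRight, add_comm]

lemma sh_max (c : ℤ) {F : ℤ →₀ ℤ} (hF : F ≠ 0) :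
    (sh c F).support.max.unbotD 0 = F.support.max.unbotD 0 + c := by
  have hs : F.support.Nonempty := Finsupp.support_nonempty_iff.2 hF
  have hs' : (sh c F).support.Nonempty := by
    rw [sh_support]; exact hs.image _
  rw [← Finset.coe_max' hs', ← Finset.coe_max' hs, WithBot.unbotD_coe, WithBot.unbotD_coe]
  apply le_antisymm
  · apply Finset.max'_le
    intro y hy
    rw [sh_support] at hy
    obtain ⟨z, hz, rfl⟩ := Finset.mem_image.1 hy
    exact add_le_add_left (Finset.le_max' _ _ hz) c
  · apply Finset.le_max'
    rw [sh_support]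
    exact Finset.mem_image.2 ⟨_, Finset.max'_mem _ _, rfl⟩

lemma sh_min (c : ℤ) {F : ℤ →₀ ℤ} (hF : F ≠ 0) :
    (sh c F).support.min.untopD 0 = F.support.min.untopD 0 + c := by
  have hs : F.support.Nonempty := Finsupp.support_nonempty_iff.2 hF
  have hs' : (sh c F).support.Nonempty := by
    rw [sh_support]; exact hs.image _
  rw [← Finset.coe_min' hs', ← Finset.coe_min' hs, WithTop.untopD_coe, WithTop.untopD_coe]
  apply le_antisymm
  · apply Finset.min'_le
    rw [sh_support]
    exact Finset.mem_image.2 ⟨_, Finset.min'_mem _ _, rfl⟩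
  · apply Finset.le_min'
    intro y hy
    rw [sh_support] at hy
    obtain ⟨z, hz, rfl⟩ := Finset.mem_image.1 hy
    exact add_le_add_left (Finset.min'_le _ _ hz) c

lemma sh_sumabs (c : ℤ) (F : ℤ →₀ ℤ) :
    ∑ j ∈ (sh c F).support, |sh c F j| = ∑ j ∈ F.support, |F j| := by
  rw [sh_support, Finset.sum_image (fun x _ y _ h => by omega)]
  exact Finset.sum_congr rfl fun j _ => by rw [sh_apply]; simp

lemma m_le_M {F : ℤ →₀ ℤ} (hF : F ≠ 0) :
    F.support.min.untopD 0 ≤ F.support.max.unbotD 0 := by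
  obtain ⟨j, hj⟩ := Finsupp.support_nonempty_iff.2 hF
  exact le_trans (minun_le hj) (le_maxun hj)

/-! ### n-length step bounds -/

lemma Llen_sh (e r : ℤ) (he : e = 1 ∨ e = -1) (F : ℤ →₀ ℤ) :
    Llen (r + e) (sh e F) ≤ Llen r F + 1 := by
  rcases eq_or_ne F 0 with rfl | hF
  · rw [sh_zero]
    unfold Llen pdeg qdeg
    simp only [Finsupp.support_zero, Finset.sum_empty, Finset.max_empty, Finset.min_empty]
    rcases abs_cases r with ⟨h1, _⟩ | ⟨h1, _⟩ <;>
      rcases abs_cases (r + e) with ⟨h2, _⟩ | ⟨h2, _⟩ <;>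
      rcases he with rfl | rfl <;>
      simp only [WithBot.unbotD_bot, WithTop.untopD_top] <;> omega
  · have hmM := m_le_M hF
    unfold Llen pdeg qdeg
    rw [sh_max e hF, sh_min e hF, sh_sumabs]
    rcases abs_cases r with ⟨h1, _⟩ | ⟨h1, _⟩ <;>
      rcases abs_cases (r + e) with ⟨h2, _⟩ | ⟨h2, _⟩ <;>
      rcases he with rfl | rfl <;> omega

lemma Llen_single (r d e : ℤ) (hd1 : -1 ≤ d) (hd2 : d ≤ 0) (he : |e| ≤ 1)
    (F : ℤ →₀ ℤ) : Llen r (F + Finsupp.single d e) ≤ Llen r F + 1 := by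
  classical
  set F' := F + Finsupp.single d e with hF'
  have hsub : F'.support ⊆ insert d F.support := by
    intro j hj
    have h1 := Finsupp.support_add hj
    rcases Finset.mem_union.1 h1 with h | h
    · exact Finset.mem_insert_of_mem h
    · have := Finsupp.support_single_subset h
      simp only [Finset.mem_singleton] at this
      subst this
      exact Finset.mem_insert_self _ _
  have hq : qdeg r F' ≤ qdeg r F := by
    apply max_le (le_max_left _ _)
    apply maxun_le (qdeg_nonneg r F)
    intro j hj
    rcases Finset.mem_insert.1 (hsub hj) with rfl | h
    · exact le_trans hd2 (qdeg_nonneg r F)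
    · exact mem_le_qdeg h
  have hp : pdeg r F' ≤ pdeg r F := by
    have hmin : -(pdeg r F) - 1 ≤ F'.support.min.untopD 0 := by
      apply le_minun (by have := pdeg_nonneg r F; omega)
      intro j hj
      rcases Finset.mem_insert.1 (hsub hj) with rfl | h
      · have := pdeg_nonneg r F; omega
      · exact pdeg_le_mem h
    unfold pdeg at hmin ⊢
    omega
  have hsum : ∑ j ∈ F'.support, |F' j| ≤ (∑ j ∈ F.support, |F j|) + |e| := by
    have h1 : ∑ j ∈ F'.support, |F' j| ≤ ∑ j ∈ insert d F.support, |F' j| :=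
      Finset.sum_le_sum_of_subset_of_nonneg hsub (fun _ _ _ => abs_nonneg _)
    have h2 : ∑ j ∈ insert d F.support, |F' j|
        = |F' d| + ∑ j ∈ (insert d F.support).erase d, |F' j| :=
      (Finset.add_sum_erase _ _ (Finset.mem_insert_self d _)).symm
    have h3 : (insert d F.support).erase d = F.support.erase d := by
      rw [Finset.erase_insert_eq_erase]
    have h4 : ∑ j ∈ F.support.erase d, |F' j| = ∑ j ∈ F.support.erase d, |F j| := by
      refine Finset.sum_congr rfl fun j hj => ?_
      have hjd : j ≠ d := (Finset.mem_erase.1 hj).1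
      rw [hF', Finsupp.add_apply, Finsupp.single_apply, if_neg (fun h => hjd h.symm), add_zero]
    have h5 : |F' d| ≤ |F d| + |e| := by
      rw [hF', Finsupp.add_apply, Finsupp.single_apply, if_pos rfl]
      exact abs_add_le _ _
    rw [h3, h4] at h2
    by_cases hd : d ∈ F.support
    · have h7 := Finset.add_sum_erase F.support (fun j => |F j|) hd
      linarith
    · have h8 : F.support.erase d = F.support := Finset.erase_eq_of_notMem hd
      have h9 : F d = 0 := Finsupp.notMem_support_iff.1 hd
      rw [h8] at h2
      rw [h9] at h5
      simp only [abs_zero, zero_add] at h5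
      linarith
  unfold Llen
  have habs : |e| ≤ 1 := he
  linarith [hq, hp, hsum]


/-! ### repv algebra -/

lemma Tm_one : Tm Tu 1 = (Tu : Matrix (Fin 2) (Fin 2) ℤ) := by simp [Tm]

lemma Tm_neg_one_bv (hT : (Tu : Matrix (Fin 2) (Fin 2) ℤ).mulVec av = bv) :
    (Tm Tu (-1)).mulVec bv = av := by
  rw [← hT, ← Tm_one Tu, Tm_mulVec]
  norm_num [Tm_zero, Matrix.one_mulVec]

lemma repv_single (d e : ℤ) :
    repv Tu (Finsupp.single d e) = e • (Tm Tu d).mulVec bv := by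
  rw [repv_eq]
  exact Finsupp.sum_single_index (by simp)

lemma repv_add (F G : ℤ →₀ ℤ) : repv Tu (F + G) = repv Tu F + repv Tu G := by
  rw [repv_eq, repv_eq, repv_eq]
  exact Finsupp.sum_add_index' (fun a => zero_smul _ _) (fun a b c => add_smul _ _ _)

lemma repv_zero : repv Tu 0 = 0 := Finsupp.sum_zero_index

lemma neg_av : (-1 : ℤ) • av = ![(-1 : ℤ), 0] := by
  funext i; fin_cases i <;> simp

lemma neg_bv : (-1 : ℤ) • bv = ![(0 : ℤ), -1] := by
  funext i; fin_cases i <;> simp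

/-! ### Lower bound: every word yields a representative of no larger n-length -/

lemma lower (hT : (Tu : Matrix (Fin 2) (Fin 2) ℤ).mulVec av = bv)
    (l : List ((Fin 2 → ℤ) × ℤ)) (hl : ∀ g ∈ l, g ∈ gens) :
    ∃ F : ℤ →₀ ℤ, repv Tu F = (E Tu l).1 ∧ Llen (E Tu l).2 F ≤ (l.length : ℤ) := by
  induction l with
  | nil =>
      refine ⟨0, ?_, ?_⟩
      · rw [repv_zero]; rfl
      · show Llen 0 (0 : ℤ →₀ ℤ) ≤ (0 : ℤ)
        unfold Llen pdeg qdeg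
        simp
  | cons g l ih =>
      obtain ⟨F, hrep, hlen⟩ := ih (fun x hx => hl x (List.mem_cons_of_mem g hx))
      have hg := hl g (List.mem_cons_self)
      have hcast : ((g :: l).length : ℤ) = (l.length : ℤ) + 1 := by
        simp [List.length_cons]
      rw [E_cons]
      simp only [gens, List.mem_cons, List.not_mem_nil, or_false] at hg
      rcases hg with rfl | rfl | rfl | rfl | rfl | rfl
      -- a
      · refine ⟨F + Finsupp.single (-1) 1, ?_, ?_⟩
        · rw [repv_add, hrep, repv_single, Tm_neg_one_bv Tu hT, tmul_fst]
          simp only [Tm_zero, Matrix.one_mulVec, one_smul]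
          exact add_comm _ _
        · rw [tmul_snd, hcast, zero_add]
          calc Llen (E Tu l).2 (F + Finsupp.single (-1) 1)
              ≤ Llen (E Tu l).2 F + 1 :=
                Llen_single _ (-1) 1 le_rfl (by norm_num) (by norm_num) F
            _ ≤ (l.length : ℤ) + 1 := by linarith
      -- b
      · refine ⟨F + Finsupp.single 0 1, ?_, ?_⟩
        · rw [repv_add, hrep, repv_single, tmul_fst]
          simp only [Tm_zero, Matrix.one_mulVec, one_smul]
          exact add_comm _ _
        · rw [tmul_snd, hcast, zero_add]
          calc Llen (E Tu l).2 (F + Finsupp.single 0 1)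
              ≤ Llen (E Tu l).2 F + 1 :=
                Llen_single _ 0 1 (by norm_num) le_rfl (by norm_num) F
            _ ≤ (l.length : ℤ) + 1 := by linarith
      -- t
      · refine ⟨sh 1 F, ?_, ?_⟩
        · rw [repv_sh, hrep, tmul_fst, zero_add]
        · rw [tmul_snd, hcast]
          have h1 := Llen_sh 1 (E Tu l).2 (Or.inl rfl) F
          rw [add_comm (1 : ℤ) (E Tu l).2] at *
          linarith
      -- a⁻¹
      · refine ⟨F + Finsupp.single (-1) (-1), ?_, ?_⟩
        · rw [repv_add, hrep, repv_single, tmul_fst]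
          simp only [Tm_zero, Matrix.one_mulVec]
          rw [show ((-1 : ℤ) • (Tm Tu (-1)).mulVec bv) = ![(-1 : ℤ), 0] by
            rw [Tm_neg_one_bv Tu hT]; exact neg_av]
          exact add_comm _ _
        · rw [tmul_snd, hcast, zero_add]
          calc Llen (E Tu l).2 (F + Finsupp.single (-1) (-1))
              ≤ Llen (E Tu l).2 F + 1 :=
                Llen_single _ (-1) (-1) le_rfl (by norm_num) (by norm_num) F
            _ ≤ (l.length : ℤ) + 1 := by linarith
      -- b⁻¹
      · refine ⟨F + Finsupp.single 0 (-1), ?_, ?_⟩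
        · rw [repv_add, hrep, repv_single, tmul_fst]
          simp only [Tm_zero, Matrix.one_mulVec]
          rw [show ((-1 : ℤ) • bv) = ![(0 : ℤ), -1] from neg_bv]
          exact add_comm _ _
        · rw [tmul_snd, hcast, zero_add]
          calc Llen (E Tu l).2 (F + Finsupp.single 0 (-1))
              ≤ Llen (E Tu l).2 F + 1 :=
                Llen_single _ 0 (-1) (by norm_num) le_rfl (by norm_num) F
            _ ≤ (l.length : ℤ) + 1 := by linarith
      -- t⁻¹
      · refine ⟨sh (-1) F, ?_, ?_⟩
        · rw [repv_sh, hrep, tmul_fst, zero_add]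
        · rw [tmul_snd, hcast]
          have h1 := Llen_sh (-1) (E Tu l).2 (Or.inr rfl) F
          rw [add_comm (-1 : ℤ) (E Tu l).2] at *
          linarith


/-! ### Word constructions -/

def rep1 (v : Fin 2 → ℤ) (c : ℤ) : List ((Fin 2 → ℤ) × ℤ) :=
  List.replicate c.natAbs (if 0 ≤ c then (v, 0) else (-v, 0))

def tlist (e : ℤ) (m : ℕ) : List ((Fin 2 → ℤ) × ℤ) :=
  List.replicate m ((0 : Fin 2 → ℤ), e)

lemma E_replicate_vec (v : Fin 2 → ℤ) (m : ℕ) :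
    E Tu (List.replicate m (v, 0)) = ((m : ℤ) • v, 0) := by
  induction m with
  | zero => show ((0 : Fin 2 → ℤ), (0 : ℤ)) = _; simp
  | succ m ih =>
      rw [List.replicate_succ, E_cons, ih]
      refine Prod.ext ?_ (by rw [tmul_snd]; simp)
      rw [tmul_fst, Tm_zero, Matrix.one_mulVec]
      have h : ((m + 1 : ℕ) : ℤ) = (m : ℤ) + 1 := by push_cast; ring
      rw [h, add_smul, one_smul, add_comm]

lemma E_rep1 (v : Fin 2 → ℤ) (c : ℤ) : E Tu (rep1 v c) = (c • v, 0) := by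
  unfold rep1
  by_cases h : 0 ≤ c
  · rw [if_pos h, E_replicate_vec]
    congr 1
    rw [show ((c.natAbs : ℤ)) = c by omega]
  · rw [if_neg h, E_replicate_vec]
    congr 1
    rw [show ((c.natAbs : ℤ)) = -c by omega, smul_neg, neg_smul, neg_neg]

lemma len_rep1 (v : Fin 2 → ℤ) (c : ℤ) : (rep1 v c).length = c.natAbs := by
  simp [rep1]

lemma len_tlist (e : ℤ) (m : ℕ) : (tlist e m).length = m := by simp [tlist]

lemma E_tlist (e : ℤ) (m : ℕ) : E Tu (tlist e m) = (0, (m : ℤ) * e) := by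
  induction m with
  | zero => show ((0 : Fin 2 → ℤ), (0 : ℤ)) = _; simp
  | succ m ih =>
      rw [tlist, List.replicate_succ, ← tlist, E_cons, ih]
      refine Prod.ext ?_ ?_
      · rw [tmul_fst]; simp [Matrix.mulVec_zero]
      · rw [tmul_snd]; push_cast; ring

lemma mem_rep1 {v : Fin 2 → ℤ} {c : ℤ} {g : (Fin 2 → ℤ) × ℤ} (hg : g ∈ rep1 v c) :
    g = (v, 0) ∨ g = (-v, 0) := by
  unfold rep1 at hg
  have h := List.eq_of_mem_replicate hg
  split_ifs at h
  · exact Or.inl h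
  · exact Or.inr h

lemma neg_av' : -av = ![(-1 : ℤ), 0] := by funext i; fin_cases i <;> simp
lemma neg_bv' : -bv = ![(0 : ℤ), -1] := by funext i; fin_cases i <;> simp

lemma rep1_av_gens {c : ℤ} {g : (Fin 2 → ℤ) × ℤ} (hg : g ∈ rep1 av c) : g ∈ gens := by
  rcases mem_rep1 hg with rfl | rfl
  · simp [gens]
  · rw [neg_av']; simp [gens]

lemma rep1_bv_gens {c : ℤ} {g : (Fin 2 → ℤ) × ℤ} (hg : g ∈ rep1 bv c) : g ∈ gens := by
  rcases mem_rep1 hg with rfl | rfl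
  · simp [gens]
  · rw [neg_bv']; simp [gens]

lemma t_gens : ((0 : Fin 2 → ℤ), (1 : ℤ)) ∈ gens := by simp [gens]
lemma tinv_gens : ((0 : Fin 2 → ℤ), (-1 : ℤ)) ∈ gens := by simp [gens]

lemma tlist_gens {e : ℤ} (he : e = 1 ∨ e = -1) {m : ℕ} {g : (Fin 2 → ℤ) × ℤ}
    (hg : g ∈ tlist e m) : g ∈ gens := by
  have h := List.eq_of_mem_replicate hg
  subst h
  rcases he with rfl | rfl
  · exact t_gens
  · exact tinv_gens

/-- The increasing middle word. -/
def midU (c : ℤ → ℤ) : ℕ → ℤ → List ((Fin 2 → ℤ) × ℤ)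
  | 0, j => rep1 bv (c j)
  | m+1, j => rep1 bv (c j) ++ (((0 : Fin 2 → ℤ), (1 : ℤ)) :: midU c m (j+1))

/-- The decreasing middle word. -/
def midD (c : ℤ → ℤ) : ℕ → ℤ → List ((Fin 2 → ℤ) × ℤ)
  | 0, j => rep1 bv (c j)
  | m+1, j => rep1 bv (c j) ++ (((0 : Fin 2 → ℤ), (-1 : ℤ)) :: midD c m (j-1))

lemma E_midU (c : ℤ → ℤ) (m : ℕ) (j : ℤ) :
    E Tu (midU c m j)
      = (∑ i ∈ Finset.range (m+1), c (j + i) • (Tm Tu i).mulVec bv, (m : ℤ)) := by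
  induction m generalizing j with
  | zero =>
      rw [midU, E_rep1]
      congr 1
      rw [Finset.sum_range_one]
      simp only [Nat.cast_zero, add_zero, Tm_zero, Matrix.one_mulVec]
  | succ m ih =>
      rw [midU, E_append, E_cons, E_rep1, ih]
      refine Prod.ext ?_ ?_
      · simp only [tmul_fst, tmul_snd, Tm_zero, Matrix.one_mulVec, zero_add]
        rw [mulVec_sum,
          Finset.sum_range_succ' (fun i => c (j + (i : ℤ)) • (Tm Tu (i : ℤ)).mulVec bv) (m+1)]
        rw [add_comm (c j • bv)]
        congr 1
        · refine Finset.sum_congr rfl fun i _ => ?_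
          rw [Matrix.mulVec_smul, Tm_mulVec]
          have h1 : j + 1 + (i : ℤ) = j + ((i + 1 : ℕ) : ℤ) := by push_cast; ring
          have h2 : (1 : ℤ) + (i : ℤ) = ((i + 1 : ℕ) : ℤ) := by push_cast; ring
          rw [h1, h2]
        · simp only [Nat.cast_zero, add_zero, Tm_zero, Matrix.one_mulVec]
      · simp only [tmul_snd]
        push_cast; ring

lemma E_midD (c : ℤ → ℤ) (m : ℕ) (j : ℤ) :
    E Tu (midD c m j)
      = (∑ i ∈ Finset.range (m+1), c (j - i) • (Tm Tu (-(i : ℤ))).mulVec bv, -(m : ℤ)) := by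
  induction m generalizing j with
  | zero =>
      rw [midD, E_rep1]
      congr 1
      rw [Finset.sum_range_one]
      simp only [Nat.cast_zero, neg_zero, sub_zero, Tm_zero, Matrix.one_mulVec]
  | succ m ih =>
      rw [midD, E_append, E_cons, E_rep1, ih]
      refine Prod.ext ?_ ?_
      · simp only [tmul_fst, tmul_snd, Tm_zero, Matrix.one_mulVec, zero_add]
        rw [mulVec_sum,
          Finset.sum_range_succ' (fun i => c (j - (i : ℤ)) • (Tm Tu (-(i : ℤ))).mulVec bv) (m+1)]
        rw [add_comm (c j • bv)]
        congr 1
        · refine Finset.sum_congr rfl fun i _ => ?_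
          rw [Matrix.mulVec_smul, Tm_mulVec]
          have h1 : j - 1 - (i : ℤ) = j - ((i + 1 : ℕ) : ℤ) := by push_cast; ring
          have h2 : (-1 : ℤ) + -(i : ℤ) = -((i + 1 : ℕ) : ℤ) := by push_cast; ring
          rw [h1, h2]
        · simp only [Nat.cast_zero, neg_zero, sub_zero, Tm_zero, Matrix.one_mulVec]
      · simp only [tmul_snd]
        push_cast; ring

lemma len_midU (c : ℤ → ℤ) (m : ℕ) (j : ℤ) :
    (midU c m j).length = m + ∑ i ∈ Finset.range (m+1), (c (j + i)).natAbs := by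
  induction m generalizing j with
  | zero => simp [midU, len_rep1]
  | succ m ih =>
      rw [midU, List.length_append, List.length_cons, len_rep1, ih,
        Finset.sum_range_succ' (fun i => (c (j + (i : ℤ))).natAbs) (m+1)]
      have h : ∑ i ∈ Finset.range (m+1), (c (j + 1 + (i : ℤ))).natAbs
          = ∑ i ∈ Finset.range (m+1), (c (j + ((i + 1 : ℕ) : ℤ))).natAbs := by
        refine Finset.sum_congr rfl fun i _ => ?_
        have h1 : j + 1 + (i : ℤ) = j + ((i + 1 : ℕ) : ℤ) := by push_cast; ring
        rw [h1]
      rw [h]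
      simp only [Nat.cast_zero, add_zero]
      omega

lemma len_midD (c : ℤ → ℤ) (m : ℕ) (j : ℤ) :
    (midD c m j).length = m + ∑ i ∈ Finset.range (m+1), (c (j - i)).natAbs := by
  induction m generalizing j with
  | zero => simp [midD, len_rep1]
  | succ m ih =>
      rw [midD, List.length_append, List.length_cons, len_rep1, ih,
        Finset.sum_range_succ' (fun i => (c (j - (i : ℤ))).natAbs) (m+1)]
      have h : ∑ i ∈ Finset.range (m+1), (c (j - 1 - (i : ℤ))).natAbs
          = ∑ i ∈ Finset.range (m+1), (c (j - ((i + 1 : ℕ) : ℤ))).natAbs := by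
        refine Finset.sum_congr rfl fun i _ => ?_
        have h1 : j - 1 - (i : ℤ) = j - ((i + 1 : ℕ) : ℤ) := by push_cast; ring
        rw [h1]
      rw [h]
      simp only [Nat.cast_zero, sub_zero]
      omega

lemma midU_gens (c : ℤ → ℤ) (m : ℕ) (j : ℤ) {g : (Fin 2 → ℤ) × ℤ}
    (hg : g ∈ midU c m j) : g ∈ gens := by
  induction m generalizing j with
  | zero => exact rep1_bv_gens hg
  | succ m ih =>
      rw [midU, List.mem_append, List.mem_cons] at hg
      rcases hg with h | h | h
      · exact rep1_bv_gens h
      · subst h; exact t_gens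
      · exact ih _ h

lemma midD_gens (c : ℤ → ℤ) (m : ℕ) (j : ℤ) {g : (Fin 2 → ℤ) × ℤ}
    (hg : g ∈ midD c m j) : g ∈ gens := by
  induction m generalizing j with
  | zero => exact rep1_bv_gens hg
  | succ m ih =>
      rw [midD, List.mem_append, List.mem_cons] at hg
      rcases hg with h | h | h
      · exact rep1_bv_gens h
      · subst h; exact tinv_gens
      · exact ih _ h

/-! ### Splitting a Finsupp sum along the normalized window -/

lemma sum_supp_split {α : Type*} [AddCommMonoid α] (F : ℤ →₀ ℤ) (n : ℤ)
    (f : ℤ → ℤ → α) (hf : ∀ j, f j 0 = 0) :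
    F.sum f = f (-(pdeg n F) - 1) (F (-(pdeg n F) - 1))
      + ∑ i ∈ Finset.range ((pdeg n F).toNat + (qdeg n F).toNat + 1),
          f (-(pdeg n F) + i) (F (-(pdeg n F) + i)) := by
  have hP := pdeg_nonneg n F
  have hQ := qdeg_nonneg n F
  set P := pdeg n F with hPdef
  set Q := qdeg n F with hQdef
  have h1 : F.sum f = ∑ j ∈ Finset.Icc (-P - 1) Q, f j (F j) := by
    apply Finsupp.sum_of_support_subset
    · intro j hj
      rw [Finset.mem_Icc]
      exact ⟨pdeg_le_mem hj, mem_le_qdeg hj⟩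
    · exact fun i _ => hf i
  have hins : Finset.Icc (-P - 1) Q = insert (-P - 1) (Finset.Icc (-P) Q) := by
    ext j
    simp only [Finset.mem_Icc, Finset.mem_insert]
    omega
  have hnot : (-P - 1) ∉ Finset.Icc (-P) Q := by
    simp only [Finset.mem_Icc]
    omega
  have h2 : ∑ j ∈ Finset.Icc (-P) Q, f j (F j)
      = ∑ i ∈ Finset.range (P.toNat + Q.toNat + 1), f (-P + i) (F (-P + i)) := by
    refine Finset.sum_nbij' (fun j => (j + P).toNat) (fun i => -P + i) ?_ ?_ ?_ ?_ ?_
    · intro a ha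
      rw [Finset.mem_Icc] at ha
      rw [Finset.mem_range]
      omega
    · intro a ha
      rw [Finset.mem_range] at ha
      rw [Finset.mem_Icc]
      omega
    · intro a ha
      rw [Finset.mem_Icc] at ha
      omega
    · intro a ha
      rw [Finset.mem_range] at ha
      omega
    · intro a ha
      rw [Finset.mem_Icc] at ha
      have h : -P + ((a + P).toNat : ℤ) = a := by omega
      rw [h]
  rw [h1, hins, Finset.sum_insert hnot, h2]


/-! ### Upper bound: a word realizing the n-length -/

lemma upper (hT : (Tu : Matrix (Fin 2) (Fin 2) ℤ).mulVec av = bv) (F : ℤ →₀ ℤ) (n : ℤ) :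
    ∃ l : List ((Fin 2 → ℤ) × ℤ), (∀ g ∈ l, g ∈ gens) ∧
      E Tu l = (repv Tu F, n) ∧ (l.length : ℤ) ≤ Llen n F := by
  have hP := pdeg_nonneg n F
  have hQ := qdeg_nonneg n F
  have hPn := neg_le_pdeg n F
  have hQn := le_qdeg n F
  have hsplit_rep : repv Tu F
      = F (-(pdeg n F) - 1) • (Tm Tu (-(pdeg n F) - 1)).mulVec bv
        + ∑ i ∈ Finset.range ((pdeg n F).toNat + (qdeg n F).toNat + 1),
            F (-(pdeg n F) + i) • (Tm Tu (-(pdeg n F) + i)).mulVec bv := by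
    rw [repv_eq]
    exact sum_supp_split F n _ (fun j => zero_smul _ _)
  have hsplit_abs : ∑ j ∈ F.support, |F j|
      = |F (-(pdeg n F) - 1)|
        + ∑ i ∈ Finset.range ((pdeg n F).toNat + (qdeg n F).toNat + 1),
            |F (-(pdeg n F) + i)| := by
    have h0 : ∑ j ∈ F.support, |F j| = F.sum fun _ c => |c| := rfl
    rw [h0]
    exact sum_supp_split F n _ (fun j => abs_zero)
  have hLlen : Llen n F = 2 * pdeg n F + 2 * qdeg n F - |n|
      + (|F (-(pdeg n F) - 1)|
        + ∑ i ∈ Finset.range ((pdeg n F).toNat + (qdeg n F).toNat + 1),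
            |F (-(pdeg n F) + i)|) := by
    unfold Llen
    rw [hsplit_abs]
  set P := pdeg n F with hPdef
  set Q := qdeg n F with hQdef
  rcases le_or_gt 0 n with hn | hn
  · -- n ≥ 0 : go down to -P, across to Q, back down to n
    refine ⟨tlist (-1) P.toNat ++ (rep1 av (F (-P - 1))
        ++ (midU (⇑F) (P.toNat + Q.toNat) (-P) ++ tlist (-1) (Q.toNat - n.toNat))),
      ?_, ?_, ?_⟩
    · intro g hg
      simp only [List.mem_append] at hg
      rcases hg with h | h | h | h
      · exact tlist_gens (Or.inr rfl) h
      · exact rep1_av_gens h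
      · exact midU_gens _ _ _ h
      · exact tlist_gens (Or.inr rfl) h
    · rw [E_append, E_append, E_append, E_tlist, E_rep1, E_midU, E_tlist]
      refine Prod.ext ?_ ?_
      · simp only [tmul_fst, tmul_snd, Matrix.mulVec_zero, add_zero, Tm_zero,
          Matrix.one_mulVec, zero_add]
        have hc : ((P.toNat : ℤ)) * (-1) = -P := by omega
        rw [hc, Matrix.mulVec_add, Matrix.mulVec_smul, mulVec_sum, hsplit_rep]
        congr 1
        · rw [← Tm_neg_one_bv Tu hT, Tm_mulVec]
          have h : -P + -1 = -P - 1 := by ring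
          rw [h]
        · refine Finset.sum_congr rfl fun i _ => ?_
          rw [Matrix.mulVec_smul, Tm_mulVec]
      · simp only [tmul_snd]
        omega
    · rw [List.length_append, List.length_append, List.length_append, len_tlist,
        len_rep1, len_midU, len_tlist, hLlen, abs_of_nonneg hn]
      push_cast [Int.natCast_natAbs]
      omega
  · -- n < 0 : go up to Q, across down to -P, back up to n
    refine ⟨tlist 1 Q.toNat ++ (midD (⇑F) (P.toNat + Q.toNat) Q
        ++ (rep1 av (F (-P - 1)) ++ tlist 1 (P.toNat - (-n).toNat))),
      ?_, ?_, ?_⟩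
    · intro g hg
      simp only [List.mem_append] at hg
      rcases hg with h | h | h | h
      · exact tlist_gens (Or.inl rfl) h
      · exact midD_gens _ _ _ h
      · exact rep1_av_gens h
      · exact tlist_gens (Or.inl rfl) h
    · rw [E_append, E_append, E_append, E_tlist, E_midD, E_rep1, E_tlist]
      refine Prod.ext ?_ ?_
      · simp only [tmul_fst, tmul_snd, Matrix.mulVec_zero, add_zero, Tm_zero,
          Matrix.one_mulVec, zero_add]
        have hc : ((Q.toNat : ℤ)) * 1 = Q := by omega
        rw [hc, Matrix.mulVec_add]
        have hsum1 : (Tm Tu Q).mulVec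
            (∑ i ∈ Finset.range (P.toNat + Q.toNat + 1),
              F (Q - (i : ℤ)) • (Tm Tu (-(i : ℤ))).mulVec bv)
            = ∑ i ∈ Finset.range (P.toNat + Q.toNat + 1),
                F (-P + (i : ℤ)) • (Tm Tu (-P + (i : ℤ))).mulVec bv := by
          rw [mulVec_sum]
          have h1 : ∀ i ∈ Finset.range (P.toNat + Q.toNat + 1),
              (Tm Tu Q).mulVec (F (Q - (i : ℤ)) • (Tm Tu (-(i : ℤ))).mulVec bv)
                = F (Q - (i : ℤ)) • (Tm Tu (Q - (i : ℤ))).mulVec bv := by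
            intro i _
            rw [Matrix.mulVec_smul, Tm_mulVec, ← sub_eq_add_neg]
          rw [Finset.sum_congr rfl h1]
          rw [← Finset.sum_range_reflect
            (fun i => F (-P + (i : ℤ)) • (Tm Tu (-P + (i : ℤ))).mulVec bv)
            (P.toNat + Q.toNat + 1)]
          refine Finset.sum_congr rfl fun i hi => ?_
          rw [Finset.mem_range] at hi
          have h : -P + ((P.toNat + Q.toNat + 1 - 1 - i : ℕ) : ℤ) = Q - (i : ℤ) := by
            omega
          rw [h]
        have hterm : (Tm Tu Q).mulVec
            ((Tm Tu (-((P.toNat + Q.toNat : ℕ) : ℤ))).mulVec (F (-P - 1) • av))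
            = F (-P - 1) • (Tm Tu (-P - 1)).mulVec bv := by
          rw [Tm_mulVec]
          have h : Q + -((P.toNat + Q.toNat : ℕ) : ℤ) = -P := by omega
          rw [h, Matrix.mulVec_smul, ← Tm_neg_one_bv Tu hT, Tm_mulVec]
          have h2 : -P + -1 = -P - 1 := by ring
          rw [h2]
        rw [hsum1, hterm, hsplit_rep, add_comm]
      · simp only [tmul_snd]
        omega
    · rw [List.length_append, List.length_append, List.length_append, len_tlist,
        len_rep1, len_midD, len_tlist, hLlen, abs_of_neg hn]
      have habsrev : ∑ i ∈ Finset.range (P.toNat + Q.toNat + 1), |F (Q - (i : ℤ))|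
          = ∑ i ∈ Finset.range (P.toNat + Q.toNat + 1), |F (-P + (i : ℤ))| := by
        rw [← Finset.sum_range_reflect (fun i => |F (-P + (i : ℤ))|)
          (P.toNat + Q.toNat + 1)]
        refine Finset.sum_congr rfl fun i hi => ?_
        rw [Finset.mem_range] at hi
        have h : -P + ((P.toNat + Q.toNat + 1 - 1 - i : ℕ) : ℤ) = Q - (i : ℤ) := by
          omega
        rw [h]
      push_cast [Int.natCast_natAbs]
      rw [habsrev]
      omega

end TBAux

section Main

theorem exists_n_minimal_representative (k : ℤ) (hk : 2 ≤ k)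
    (Tu : (Matrix (Fin 2) (Fin 2) ℤ)ˣ)
    (hTu : (Tu : Matrix (Fin 2) (Fin 2) ℤ) = !![0, -1; 1, 2 * k + 1])
    (x : Fin 2 → ℤ) (n : ℤ) :
    ∃ F : ℤ →₀ ℤ, repv Tu F = x ∧ Llen n F = (wlen Tu (x, n) : ℤ) := by
  have hT : (Tu : Matrix (Fin 2) (Fin 2) ℤ).mulVec TBAux.av = TBAux.bv := by
    rw [hTu]
    funext i
    fin_cases i <;>
      simp [Matrix.mulVec, dotProduct, Fin.sum_univ_two, TBAux.av, TBAux.bv]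
  have hrep0 : repv Tu (Finsupp.single (-1) (x 0) + Finsupp.single 0 (x 1)) = x := by
    rw [TBAux.repv_add, TBAux.repv_single, TBAux.repv_single, TBAux.Tm_zero,
      Matrix.one_mulVec, TBAux.Tm_neg_one_bv Tu hT]
    funext i
    fin_cases i <;> simp [TBAux.av, TBAux.bv]
  obtain ⟨l0, hg0, hE0, _⟩ :=
    TBAux.upper Tu hT (Finsupp.single (-1) (x 0) + Finsupp.single 0 (x 1)) n
  rw [hrep0] at hE0
  have hne : {L : ℕ | ∃ l : List ((Fin 2 → ℤ) × ℤ),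
      (∀ g ∈ l, g ∈ gens) ∧ l.foldl (tmul Tu) ((0 : Fin 2 → ℤ), 0) = (x, n)
        ∧ l.length = L}.Nonempty :=
    ⟨l0.length, l0, hg0, hE0, rfl⟩
  obtain ⟨l, hlg, hlE, hlL⟩ := Nat.sInf_mem hne
  have hE : TBAux.E Tu l = (x, n) := hlE
  obtain ⟨F, hF1, hF2⟩ := TBAux.lower Tu hT l hlg
  rw [hE] at hF1 hF2
  refine ⟨F, hF1, le_antisymm ?_ ?_⟩
  · have h2 : l.length = wlen Tu (x, n) := hlL
    have h1 : (l.length : ℤ) = (wlen Tu (x, n) : ℤ) := by exact_mod_cast h2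
    calc Llen n F ≤ (l.length : ℤ) := hF2
      _ = _ := h1
  · obtain ⟨lw, hgw, hEw, hLw⟩ := TBAux.upper Tu hT F n
    rw [hF1] at hEw
    have hw : wlen Tu (x, n) ≤ lw.length := Nat.sInf_le ⟨lw, hgw, hEw, rfl⟩
    calc (wlen Tu (x, n) : ℤ) ≤ (lw.length : ℤ) := by exact_mod_cast hw
      _ ≤ Llen n F := hLw

end Main
end

section
/- For g = (x, tⁿ) ∈ G with n ≥ 0, the word length ‖g‖ with respect to {a,b,t} equals the minimum over all integers p ≥ 0, q ≥ n and all integer coefficients c_{-p-1},...,c_q with x = Σ_{j=-p-1}^q c_j Tʲ(b) of the quantity 2p + 2q - n + Σ_{j=-p-1}^q |c_j|. -/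
abbrev Mat := Matrix (Fin 2) (Fin 2) ℤ

abbrev Gr := (Fin 2 → ℤ) × ℤ

lemma tmul_assoc (Tu : Matˣ) (g h k : Gr) :
    tmul Tu (tmul Tu g h) k = tmul Tu g (tmul Tu h k) := by
  simp only [tmul, Prod.mk.injEq]
  constructor
  · rw [Matrix.mulVec_add, Matrix.mulVec_mulVec, ← Units.val_mul, ← zpow_add, add_assoc]
  · ring

lemma one_tmul (Tu : Matˣ) (g : Gr) : tmul Tu ((0 : Fin 2 → ℤ), 0) g = g := by
  simp [tmul]

lemma tmul_one (Tu : Matˣ) (g : Gr) : tmul Tu g ((0 : Fin 2 → ℤ), 0) = g := by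
  simp [tmul]

lemma foldl_tmul (Tu : Matˣ) (l : List Gr) (g : Gr) :
    l.foldl (tmul Tu) g = tmul Tu g (l.foldl (tmul Tu) ((0 : Fin 2 → ℤ), 0)) := by
  induction l generalizing g with
  | nil => simp only [List.foldl_nil]; exact (tmul_one Tu g).symm
  | cons a l ih =>
    rw [List.foldl_cons, List.foldl_cons, ih, ih (tmul Tu _ a), one_tmul, tmul_assoc]

lemma foldl_append (Tu : Matˣ) (l1 l2 : List Gr) :
    (l1 ++ l2).foldl (tmul Tu) ((0 : Fin 2 → ℤ), 0) =
      tmul Tu (l1.foldl (tmul Tu) ((0 : Fin 2 → ℤ), 0))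
        (l2.foldl (tmul Tu) ((0 : Fin 2 → ℤ), 0)) := by
  rw [List.foldl_append, foldl_tmul]

def Ev (Tu : Matˣ) (j : ℤ) : Fin 2 → ℤ :=
  ((Tu ^ j : Matˣ) : Mat).mulVec ![0, 1]

lemma mulVec_Ev (Tu : Matˣ) (i j : ℤ) :
    ((Tu ^ i : Matˣ) : Mat).mulVec (Ev Tu j) = Ev Tu (i + j) := by
  rw [Ev, Ev, Matrix.mulVec_mulVec, ← Units.val_mul, ← zpow_add]

lemma mulVec_e1 (d : ℤ) (Tu : Matˣ) (hTu : (Tu : Mat) = !![0, -1; 1, d]) (m : ℤ) :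
    ((Tu ^ m : Matˣ) : Mat).mulVec ![1, 0] = Ev Tu (m - 1) := by
  have h1 : (Tu : Mat).mulVec ![1, 0] = ![0, 1] := by
    rw [hTu]; funext i; fin_cases i <;> simp [Matrix.mulVec, dotProduct]
  have h2 : (Tu ^ m : Matˣ) = (Tu ^ (m - 1) : Matˣ) * Tu ^ (1:ℤ) := by
    rw [← zpow_add]; ring_nf
  rw [h2, Units.val_mul, ← Matrix.mulVec_mulVec, zpow_one, h1, Ev]

def eval (Tu : Matˣ) (l : List Gr) : Gr := l.foldl (tmul Tu) ((0 : Fin 2 → ℤ), 0)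

/-- word for bᵏ (k ∈ ℤ) -/
def wb (k : ℤ) : List Gr :=
  List.replicate k.natAbs (if 0 ≤ k then (![0,1], (0:ℤ)) else (![0,-1], 0))

def wa (k : ℤ) : List Gr :=
  List.replicate k.natAbs (if 0 ≤ k then (![1,0], (0:ℤ)) else (![-1,0], 0))

def wt (k : ℤ) : List Gr :=
  List.replicate k.natAbs (if 0 ≤ k then ((0:Fin 2 → ℤ), (1:ℤ)) else (0, -1))

lemma wb_mem (k : ℤ) : ∀ y ∈ wb k, y ∈ gens := by
  intro y hy; rw [wb] at hy
  rcases List.eq_of_mem_replicate hy with rfl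
  split <;> simp [gens]

lemma wa_mem (k : ℤ) : ∀ y ∈ wa k, y ∈ gens := by
  intro y hy; rw [wa] at hy
  rcases List.eq_of_mem_replicate hy with rfl
  split <;> simp [gens]

lemma wt_mem (k : ℤ) : ∀ y ∈ wt k, y ∈ gens := by
  intro y hy; rw [wt] at hy
  rcases List.eq_of_mem_replicate hy with rfl
  split <;> simp [gens]

lemma eval_replicate_vec (Tu : Matˣ) (v : Fin 2 → ℤ) (n : ℕ) :
    eval Tu (List.replicate n (v, (0:ℤ))) = ((n : ℤ) • v, 0) := by
  induction n with
  | zero => simp [eval]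
  | succ n ih =>
    rw [List.replicate_succ, eval, List.foldl_cons, foldl_tmul, one_tmul, ← eval, ih, tmul]
    simp only [zpow_zero, Units.val_one, Matrix.one_mulVec, add_zero]
    congr 1
    push_cast
    rw [add_smul, one_smul, add_comm]


lemma eval_replicate_t (Tu : Matˣ) (s : ℤ) (n : ℕ) :
    eval Tu (List.replicate n ((0 : Fin 2 → ℤ), s)) = (0, (n : ℤ) * s) := by
  induction n with
  | zero => simp [eval]
  | succ n ih =>
    rw [List.replicate_succ, eval, List.foldl_cons, foldl_tmul, one_tmul, ← eval, ih, tmul]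
    simp only [Matrix.mulVec_zero, add_zero, zero_add]
    congr 1
    push_cast
    ring

lemma eval_wb (Tu : Matˣ) (k : ℤ) : eval Tu (wb k) = (k • ![0,1], 0) := by
  by_cases h : 0 ≤ k
  · rw [wb, if_pos h, eval_replicate_vec]; congr 2; omega
  · rw [wb, if_neg h, eval_replicate_vec]
    congr 1
    have hk : (k.natAbs : ℤ) = -k := by omega
    rw [hk]
    funext i; fin_cases i <;> simp

lemma eval_wa (Tu : Matˣ) (k : ℤ) : eval Tu (wa k) = (k • ![1,0], 0) := by
  by_cases h : 0 ≤ k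
  · rw [wa, if_pos h, eval_replicate_vec]; congr 2; omega
  · rw [wa, if_neg h, eval_replicate_vec]
    congr 1
    have hk : (k.natAbs : ℤ) = -k := by omega
    rw [hk]
    funext i; fin_cases i <;> simp

lemma eval_wt (Tu : Matˣ) (k : ℤ) : eval Tu (wt k) = (0, k) := by
  by_cases h : 0 ≤ k
  · rw [wt, if_pos h, eval_replicate_t]; congr 1; omega
  · rw [wt, if_neg h, eval_replicate_t]; congr 1; omega

lemma wb_length (k : ℤ) : (wb k).length = k.natAbs := by simp [wb]
lemma wa_length (k : ℤ) : (wa k).length = k.natAbs := by simp [wa]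
lemma wt_length (k : ℤ) : (wt k).length = k.natAbs := by simp [wt]

def rise (c : ℤ →₀ ℤ) (j : ℤ) : ℕ → List Gr
  | 0 => []
  | (k+1) => ((0 : Fin 2 → ℤ), (1:ℤ)) :: (wb (c (j+1)) ++ rise c (j+1) k)

lemma rise_mem (c : ℤ →₀ ℤ) (j : ℤ) (k : ℕ) : ∀ y ∈ rise c j k, y ∈ gens := by
  induction k generalizing j with
  | zero => simp [rise]
  | succ k ih =>
    intro y hy
    rw [rise] at hy
    rcases List.mem_cons.1 hy with rfl | hy
    · simp [gens]
    · rcases List.mem_append.1 hy with hy | hy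
      · exact wb_mem _ y hy
      · exact ih _ y hy

lemma rise_length (c : ℤ →₀ ℤ) (j : ℤ) (k : ℕ) :
    (rise c j k).length = k + ∑ i ∈ Finset.range k, (c (j + 1 + i)).natAbs := by
  induction k generalizing j with
  | zero => simp [rise]
  | succ k ih =>
    rw [rise, List.length_cons, List.length_append, wb_length, ih]
    rw [Finset.sum_range_succ']
    simp only [Nat.cast_zero, add_zero]
    have : ∀ i : ℕ, c (j + 1 + (i + 1 : ℕ)) = c (j + 1 + 1 + i) := by
      intro i; congr 1; push_cast; ring
    simp only [this]
    ring

lemma eval_rise (Tu : Matˣ) (c : ℤ →₀ ℤ) (j : ℤ) (k : ℕ) :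
    eval Tu (rise c j k) =
      (∑ i ∈ Finset.range k, c (j + 1 + i) • Ev Tu (1 + i), (k : ℤ)) := by
  induction k generalizing j with
  | zero => simp [rise, eval]
  | succ k ih =>
    rw [rise, eval, List.foldl_cons, foldl_tmul, one_tmul, ← eval,
      show eval Tu (wb (c (j+1)) ++ rise c (j+1) k)
          = tmul Tu (eval Tu (wb (c (j+1)))) (eval Tu (rise c (j+1) k)) from
        foldl_append Tu _ _,
      eval_wb, ih, tmul, tmul]
    simp only [zpow_zero, Units.val_one, Matrix.one_mulVec, zero_add, add_zero]
    refine Prod.ext ?_ (by push_cast; ring)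
    simp only
    rw [Matrix.mulVec_add, Matrix.mulVec_smul]
    have hEv : ((Tu ^ (1:ℤ) : Matˣ) : Mat).mulVec ![0,1] = Ev Tu 1 := rfl
    have hsum : ((Tu ^ (1:ℤ) : Matˣ) : Mat).mulVec (∑ i ∈ Finset.range k, c (j + 1 + 1 + i) • Ev Tu (1 + i))
        = ∑ i ∈ Finset.range k, c (j + 1 + 1 + i) • Ev Tu (1 + (i + 1)) := by
      rw [show ((Tu ^ (1:ℤ) : Matˣ) : Mat).mulVec = Matrix.mulVecLin ((Tu ^ (1:ℤ) : Matˣ) : Mat) from rfl]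
      rw [map_sum]
      refine Finset.sum_congr rfl fun i _ => ?_
      rw [map_smul]
      congr 1
      show ((Tu ^ (1:ℤ) : Matˣ) : Mat).mulVec (Ev Tu (1 + i)) = _
      rw [mulVec_Ev]
      congr 1
      push_cast; ring
    rw [hEv, hsum, Finset.sum_range_succ']
    simp only [Nat.cast_zero, add_zero, Nat.cast_add, Nat.cast_one]
    rw [add_comm]
    congr 1
    refine Finset.sum_congr rfl fun i _ => ?_
    rw [show (j + 1 + (i + 1 : ℤ)) = j + 1 + 1 + i by ring]

lemma sum_range_Icc {A : Type*} [AddCommMonoid A] (g : ℤ → A) (a : ℤ) (k : ℕ) :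
    ∑ i ∈ Finset.range k, g (a + i) = ∑ j ∈ Finset.Icc a (a + k - 1), g j := by
  induction k with
  | zero =>
    have : Finset.Icc a (a + (0:ℕ) - 1) = ∅ := by
      apply Finset.Icc_eq_empty; push_cast; omega
    simp [this]
  | succ k ih =>
    rw [Finset.sum_range_succ, ih]
    have h1 : Finset.Icc a (a + (k+1:ℕ) - 1) = insert (a + k) (Finset.Icc a (a + k - 1)) := by
      ext j
      simp only [Finset.mem_Icc, Finset.mem_insert]
      push_cast
      omega
    rw [h1, Finset.sum_insert (by simp only [Finset.mem_Icc]; omega)]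
    rw [add_comm]

lemma eval_append (Tu : Matˣ) (l1 l2 : List Gr) :
    eval Tu (l1 ++ l2) = tmul Tu (eval Tu l1) (eval Tu l2) := foldl_append Tu l1 l2

lemma upper_bound (d : ℤ) (Tu : Matˣ) (hTu : (Tu : Mat) = !![0, -1; 1, d])
    (x : Fin 2 → ℤ) (n p q : ℤ) (c : ℤ →₀ ℤ)
    (hn : 0 ≤ n) (hp : 0 ≤ p) (hq : n ≤ q)
    (hsupp : ∀ j ∈ c.support, -p - 1 ≤ j ∧ j ≤ q)
    (hx : x = c.sum fun j cj => cj • Ev Tu j) :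
    ∃ l : List Gr, (∀ y ∈ l, y ∈ gens) ∧ eval Tu l = (x, n) ∧
      (l.length : ℤ) = 2 * p + 2 * q - n + ∑ j ∈ c.support, |c j| := by
  set k : ℕ := (p + q).toNat with hk
  have hkz : (k : ℤ) = p + q := Int.toNat_of_nonneg (by omega)
  have hIccSplit : ∀ {A : Type} [AddCommMonoid A] (g : ℤ → A),
      ∑ j ∈ Finset.Icc (-p-1) q, g j
        = g (-p-1) + (g (-p) + ∑ i ∈ Finset.range k, g (-p+1+i)) := by
    intro A _ g
    have h1 : Finset.Icc (-p-1) q = insert (-p-1) (insert (-p) (Finset.Icc (-p+1) q)) := by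
      ext j
      simp only [Finset.mem_Icc, Finset.mem_insert]
      omega
    have h2 : (-p-1) ∉ insert (-p) (Finset.Icc (-p+1) q) := by
      simp only [Finset.mem_insert, Finset.mem_Icc]; omega
    have h3 : (-p) ∉ Finset.Icc (-p+1) q := by
      simp only [Finset.mem_Icc]; omega
    have h4 : Finset.Icc (-p+1) q = Finset.Icc (-p+1) (-p+1+(k:ℤ)-1) := by
      congr 1; omega
    rw [h1, Finset.sum_insert h2, Finset.sum_insert h3, h4, ← sum_range_Icc g (-p+1) k]
  refine ⟨wt (-p) ++ (wa (c (-p-1)) ++ (wb (c (-p)) ++ (rise c (-p) k ++ wt (n - q)))),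
    ?_, ?_, ?_⟩
  · intro y hy
    simp only [List.mem_append] at hy
    rcases hy with h|h|h|h|h
    exacts [wt_mem _ y h, wa_mem _ y h, wb_mem _ y h, rise_mem _ _ _ y h, wt_mem _ y h]
  · -- evaluation
    rw [eval_append, eval_append, eval_append, eval_append,
      eval_wt, eval_wa, eval_wb, eval_rise, eval_wt]
    simp only [tmul, Matrix.mulVec_zero, add_zero, zpow_zero, Units.val_one,
      Matrix.one_mulVec, zero_add]
    refine Prod.ext ?_ (by simp only; omega)
    simp only
    rw [Matrix.mulVec_add, Matrix.mulVec_add, Matrix.mulVec_smul, Matrix.mulVec_smul,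
      mulVec_e1 d Tu hTu]
    have hTS : ((Tu ^ (-p) : Matˣ) : Mat).mulVec
        (∑ i ∈ Finset.range k, c (-p + 1 + i) • Ev Tu (1 + i))
        = ∑ i ∈ Finset.range k, c (-p + 1 + i) • Ev Tu (-p + (1 + i)) := by
      rw [show ((Tu ^ (-p) : Matˣ) : Mat).mulVec
          = Matrix.mulVecLin ((Tu ^ (-p) : Matˣ) : Mat) from rfl, map_sum]
      exact Finset.sum_congr rfl fun i _ => by
        rw [map_smul]; congr 1; exact mulVec_Ev Tu (-p) (1 + i)
    rw [hTS]
    have hIcc : x = ∑ j ∈ Finset.Icc (-p-1) q, c j • Ev Tu j := by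
      rw [hx]
      exact Finsupp.sum_of_support_subset c
        (fun j hj => Finset.mem_Icc.2 ⟨(hsupp j hj).1, (hsupp j hj).2⟩) _
        (fun i _ => zero_smul ℤ _)
    rw [hIcc, hIccSplit (fun j => c j • Ev Tu j)]
    have hEvp : ((Tu ^ (-p) : Matˣ) : Mat).mulVec ![0,1] = Ev Tu (-p) := rfl
    rw [hEvp]
    congr 1
    congr 1
    exact Finset.sum_congr rfl fun i _ => by
      rw [show (-p + (1 + (i:ℤ))) = -p + 1 + i by ring]
  · -- length
    simp only [List.length_append, wt_length, wa_length, wb_length, rise_length]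
    have habs : (∑ j ∈ c.support, |c j|) = ∑ j ∈ Finset.Icc (-p-1) q, |c j| := by
      refine Finset.sum_subset
        (fun j hj => Finset.mem_Icc.2 ⟨(hsupp j hj).1, (hsupp j hj).2⟩) ?_
      intro j _ hj
      rw [Finsupp.notMem_support_iff.1 hj, abs_zero]
    rw [habs, hIccSplit (fun j => |c j|),
      show (-p).natAbs = p.toNat by omega, show (n-q).natAbs = (q-n).toNat by omega]
    push_cast [Int.natCast_natAbs, Int.toNat_of_nonneg (show (0:ℤ) ≤ p by omega),
      Int.toNat_of_nonneg (show (0:ℤ) ≤ q - n by omega), hkz]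
    ring

lemma sum_add_single_smul (s : Finset ℤ) (c : ℤ →₀ ℤ) (i ε : ℤ) (hi : i ∈ s)
    (V : ℤ → Fin 2 → ℤ) :
    ∑ j ∈ s, (c + Finsupp.single i ε) j • V j = (∑ j ∈ s, c j • V j) + ε • V i := by
  simp only [Finsupp.add_apply, add_smul, Finset.sum_add_distrib]
  congr 1
  rw [Finset.sum_eq_single_of_mem i hi
    (fun j _ hne => by
      rw [Finsupp.single_apply, if_neg (fun h => hne h.symm), zero_smul]),
    Finsupp.single_eq_same]

lemma sum_add_single_abs (s : Finset ℤ) (c : ℤ →₀ ℤ) (i ε : ℤ) (hi : i ∈ s) :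
    ∑ j ∈ s, |(c + Finsupp.single i ε) j| ≤ (∑ j ∈ s, |c j|) + |ε| := by
  calc ∑ j ∈ s, |(c + Finsupp.single i ε) j|
      ≤ ∑ j ∈ s, (|c j| + |Finsupp.single i ε j|) :=
        Finset.sum_le_sum fun j _ => by rw [Finsupp.add_apply]; exact abs_add_le _ _
    _ = (∑ j ∈ s, |c j|) + ∑ j ∈ s, |Finsupp.single i ε j| := Finset.sum_add_distrib
    _ = (∑ j ∈ s, |c j|) + |ε| := by
        congr 1
        rw [Finset.sum_eq_single_of_mem i hi
          (fun j _ hne => by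
            rw [Finsupp.single_apply, if_neg (fun h => hne h.symm), abs_zero]),
          Finsupp.single_eq_same]

lemma sum_Icc_extend {A : Type} [AddCommMonoid A] (c : ℤ →₀ ℤ) (V : ℤ → ℤ → A)
    (hV : ∀ j, V j 0 = 0) (a b a' b' : ℤ) (ha : a' ≤ a) (hb : b ≤ b')
    (hsupp : ∀ j ∈ c.support, a ≤ j ∧ j ≤ b) :
    ∑ j ∈ Finset.Icc a' b', V j (c j) = ∑ j ∈ Finset.Icc a b, V j (c j) := by
  refine (Finset.sum_subset (Finset.Icc_subset_Icc ha hb) ?_).symm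
  intro j _ hj
  have : c j = 0 := by
    by_contra h
    have := hsupp j (Finsupp.mem_support_iff.2 h)
    rw [Finset.mem_Icc] at hj
    omega
  rw [this, hV]

lemma lower_bound (d : ℤ) (Tu : Matˣ) (hTu : (Tu : Mat) = !![0, -1; 1, d])
    (l : List Gr) :
    (∀ y ∈ l, y ∈ gens) →
    ∃ (P Q : ℤ) (c : ℤ →₀ ℤ), 0 ≤ P ∧ 0 ≤ Q ∧
      -P ≤ (eval Tu l).2 ∧ (eval Tu l).2 ≤ Q ∧
      (∀ j ∈ c.support, -P - 1 ≤ j ∧ j ≤ Q) ∧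
      (eval Tu l).1 = ∑ j ∈ Finset.Icc (-P-1) Q, c j • Ev Tu j ∧
      2*P + 2*Q - ((eval Tu l).2.natAbs : ℤ) + ∑ j ∈ Finset.Icc (-P-1) Q, |c j|
        ≤ (l.length : ℤ) := by
  induction l using List.reverseRecOn with
  | nil =>
    intro _
    refine ⟨0, 0, 0, le_refl _, le_refl _, ?_⟩
    simp [eval]
  | append_singleton l g ih =>
    intro hl
    obtain ⟨P, Q, c, hP, hQ, hmP, hmQ, hsupp, hsum, hlen⟩ :=
      ih (fun y hy => hl y (List.mem_append_left _ hy))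
    have hg := hl g (List.mem_append_right _ (List.mem_singleton_self g))
    set e := eval Tu l with he
    have heval : eval Tu (l ++ [g]) = tmul Tu e g := by
      rw [eval_append]
      congr 1
      exact one_tmul Tu g
    have hlen' : ((l ++ [g]).length : ℤ) = (l.length : ℤ) + 1 := by
      simp
    -- helper for the a/b cases
    have hletter : ∀ (i ε : ℤ), ε = 1 ∨ ε = -1 → -P-1 ≤ i → i ≤ Q →
        (eval Tu (l ++ [g])).1 = e.1 + ε • Ev Tu i →
        (eval Tu (l ++ [g])).2 = e.2 →
        ∃ (P' Q' : ℤ) (c' : ℤ →₀ ℤ), 0 ≤ P' ∧ 0 ≤ Q' ∧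
          -P' ≤ (eval Tu (l ++ [g])).2 ∧ (eval Tu (l ++ [g])).2 ≤ Q' ∧
          (∀ j ∈ c'.support, -P' - 1 ≤ j ∧ j ≤ Q') ∧
          (eval Tu (l ++ [g])).1 = ∑ j ∈ Finset.Icc (-P'-1) Q', c' j • Ev Tu j ∧
          2*P' + 2*Q' - (((eval Tu (l ++ [g])).2.natAbs : ℤ))
            + ∑ j ∈ Finset.Icc (-P'-1) Q', |c' j| ≤ ((l ++ [g]).length : ℤ) := by
      intro i ε hε hi1 hi2 h1 h2
      have hiIcc : i ∈ Finset.Icc (-P-1) Q := Finset.mem_Icc.2 ⟨hi1, hi2⟩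
      refine ⟨P, Q, c + Finsupp.single i ε, hP, hQ, h2 ▸ hmP, h2 ▸ hmQ, ?_, ?_, ?_⟩
      · intro j hj
        rcases Finset.mem_union.1 (Finsupp.support_add hj) with hj | hj
        · exact hsupp j hj
        · have := Finsupp.support_single_subset hj
          simp only [Finset.mem_singleton] at this
          subst this
          exact ⟨hi1, hi2⟩
      · rw [h1, sum_add_single_smul _ _ _ _ hiIcc, hsum]
      · have h3 := sum_add_single_abs (Finset.Icc (-P-1) Q) c i ε hiIcc
        have h4 : |ε| = 1 := by rcases hε with rfl | rfl <;> simp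
        rw [h2, hlen']
        omega
    -- case analysis on the generator
    have hg' : g = (![1, 0], 0) ∨ g = (![0, 1], 0) ∨ g = ((0 : Fin 2 → ℤ), 1) ∨
        g = (![-1, 0], 0) ∨ g = (![0, -1], 0) ∨ g = ((0 : Fin 2 → ℤ), -1) := by
      simpa [gens] using hg
    rcases hg' with rfl | rfl | rfl | rfl | rfl | rfl
    · -- a
      refine hletter (e.2 - 1) 1 (Or.inl rfl) (by omega) (by omega) ?_ ?_
      · rw [heval, tmul]
        simp only
        rw [mulVec_e1 d Tu hTu, one_smul]
      · rw [heval, tmul]; simp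
    · -- b
      refine hletter e.2 1 (Or.inl rfl) (by omega) (by omega) ?_ ?_
      · rw [heval, tmul]
        simp only
        rw [one_smul]; rfl
      · rw [heval, tmul]; simp
    · -- t
      have heval' : eval Tu (l ++ [((0 : Fin 2 → ℤ), 1)]) = (e.1, e.2 + 1) := by
        rw [heval, tmul, Matrix.mulVec_zero, add_zero]
      set Q' : ℤ := max Q (e.2 + 1) with hQ'
      have hQle : Q ≤ Q' := le_max_left _ _
      have hmle : e.2 + 1 ≤ Q' := le_max_right _ _
      have hch : Q' = Q ∨ Q' = e.2 + 1 := max_choice Q (e.2+1)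
      refine ⟨P, Q', c, hP, by omega, ?_, ?_, ?_, ?_, ?_⟩
      · rw [heval']; simp only; omega
      · rw [heval']; simp only; omega
      · intro j hj; have := hsupp j hj; omega
      · rw [heval']
        simp only
        rw [sum_Icc_extend c (fun j cj => cj • Ev Tu j) (fun j => zero_smul ℤ _)
          (-P-1) Q (-P-1) Q' (le_refl _) hQle hsupp, hsum]
      · have hext := sum_Icc_extend c (fun _ cj => |cj|) (fun _ => abs_zero)
          (-P-1) Q (-P-1) Q' (le_refl _) hQle hsupp
        rw [heval', hlen', hext]
        simp only
        omega
    · -- a⁻¹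
      refine hletter (e.2 - 1) (-1) (Or.inr rfl) (by omega) (by omega) ?_ ?_
      · rw [heval, tmul]
        simp only
        have hv : ![(-1:ℤ), 0] = (-1 : ℤ) • ![1, 0] := by
          funext j; fin_cases j <;> simp
        rw [hv, Matrix.mulVec_smul, mulVec_e1 d Tu hTu]
      · rw [heval, tmul]; simp
    · -- b⁻¹
      refine hletter e.2 (-1) (Or.inr rfl) (by omega) (by omega) ?_ ?_
      · rw [heval, tmul]
        simp only
        have hv : ![(0:ℤ), -1] = (-1 : ℤ) • ![0, 1] := by
          funext j; fin_cases j <;> simp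
        rw [hv, Matrix.mulVec_smul]; rfl
      · rw [heval, tmul]; simp
    · -- t⁻¹
      have heval' : eval Tu (l ++ [((0 : Fin 2 → ℤ), -1)]) = (e.1, e.2 - 1) := by
        rw [heval, tmul, Matrix.mulVec_zero, add_zero]
        rfl
      set P' : ℤ := max P (1 - e.2) with hP'
      have hPle : P ≤ P' := le_max_left _ _
      have hmle : 1 - e.2 ≤ P' := le_max_right _ _
      have hch : P' = P ∨ P' = 1 - e.2 := max_choice P (1 - e.2)
      refine ⟨P', Q, c, by omega, hQ, ?_, ?_, ?_, ?_, ?_⟩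
      · rw [heval']; simp only; omega
      · rw [heval']; simp only; omega
      · intro j hj; have := hsupp j hj; omega
      · rw [heval']
        simp only
        rw [sum_Icc_extend c (fun j cj => cj • Ev Tu j) (fun j => zero_smul ℤ _)
          (-P-1) Q (-P'-1) Q (by omega) (le_refl _) hsupp, hsum]
      · have hext := sum_Icc_extend c (fun _ cj => |cj|) (fun _ => abs_zero)
          (-P-1) Q (-P'-1) Q (by omega) (le_refl _) hsupp
        rw [heval', hlen', hext]
        simp only
        omega

theorem word_length_eq_min_over_representations (d : ℤ)
    (Tu : (Matrix (Fin 2) (Fin 2) ℤ)ˣ)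
    (hTu : (Tu : Matrix (Fin 2) (Fin 2) ℤ) = !![0, -1; 1, d])
    (x : Fin 2 → ℤ) (n : ℤ) (hn : 0 ≤ n) :
    (wlen Tu (x, n) : ℤ) =
      sInf {m : ℤ | ∃ (p q : ℤ) (c : ℤ →₀ ℤ), 0 ≤ p ∧ n ≤ q ∧
        (∀ j ∈ c.support, -p - 1 ≤ j ∧ j ≤ q) ∧
        x = (c.sum fun j cj =>
          cj • ((Tu ^ j : (Matrix (Fin 2) (Fin 2) ℤ)ˣ) :
            Matrix (Fin 2) (Fin 2) ℤ).mulVec ![0, 1]) ∧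
        m = 2 * p + 2 * q - n + ∑ j ∈ c.support, |c j|} := by
  set S : Set ℤ := {m : ℤ | ∃ (p q : ℤ) (c : ℤ →₀ ℤ), 0 ≤ p ∧ n ≤ q ∧
        (∀ j ∈ c.support, -p - 1 ≤ j ∧ j ≤ q) ∧
        x = (c.sum fun j cj => cj • Ev Tu j) ∧
        m = 2 * p + 2 * q - n + ∑ j ∈ c.support, |c j|} with hSdef
  show (wlen Tu (x, n) : ℤ) = sInf S
  -- canonical representation with p = 0, q = n
  set c0 : ℤ →₀ ℤ := Finsupp.single (-1) (x 0) + Finsupp.single 0 (x 1) with hc0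
  have hsupp0 : ∀ j ∈ c0.support, -(0:ℤ) - 1 ≤ j ∧ j ≤ n := by
    intro j hj
    rcases Finset.mem_union.1 (Finsupp.support_add hj) with hj | hj
    · have h := Finsupp.support_single_subset hj
      simp only [Finset.mem_singleton] at h
      omega
    · have h := Finsupp.support_single_subset hj
      simp only [Finset.mem_singleton] at h
      omega
  have hx0 : x = c0.sum fun j cj => cj • Ev Tu j := by
    rw [hc0, Finsupp.sum_add_index' (fun j => zero_smul ℤ (Ev Tu j))
        (fun j b1 b2 => add_smul b1 b2 (Ev Tu j)),
      Finsupp.sum_single_index (zero_smul ℤ (Ev Tu (-1))),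
      Finsupp.sum_single_index (zero_smul ℤ (Ev Tu 0))]
    have hEm1 : Ev Tu (-1) = ![1, 0] := by
      have := mulVec_e1 d Tu hTu 0
      rw [zero_sub] at this
      rw [← this, zpow_zero, Units.val_one, Matrix.one_mulVec]
    have hE0 : Ev Tu 0 = ![0, 1] := by
      rw [Ev, zpow_zero, Units.val_one, Matrix.one_mulVec]
    rw [hEm1, hE0]
    funext i
    fin_cases i <;> simp
  have hm0 : (2 * 0 + 2 * n - n + ∑ j ∈ c0.support, |c0 j|) ∈ S := by
    exact ⟨0, n, c0, le_refl 0, le_refl n, hsupp0, hx0, rfl⟩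
  have hSne : S.Nonempty := ⟨_, hm0⟩
  have hSbdd : BddBelow S := by
    refine ⟨0, fun m hm => ?_⟩
    obtain ⟨p, q, c, hp, hq, _, _, rfl⟩ := hm
    have : (0:ℤ) ≤ ∑ j ∈ c.support, |c j| :=
      Finset.sum_nonneg fun j _ => abs_nonneg _
    omega
  -- the word-length set is nonempty
  obtain ⟨l0, hl0g, hl0e, hl0len⟩ :=
    upper_bound d Tu hTu x n 0 n c0 hn (le_refl 0) (le_refl n) hsupp0 hx0
  have hWne : {L : ℕ | ∃ l : List ((Fin 2 → ℤ) × ℤ),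
      (∀ y ∈ l, y ∈ gens) ∧ l.foldl (tmul Tu) ((0 : Fin 2 → ℤ), 0) = (x, n) ∧
      l.length = L}.Nonempty := ⟨l0.length, l0, hl0g, hl0e, rfl⟩
  refine le_antisymm ?_ ?_
  · -- wlen ≤ sInf S
    refine le_csInf hSne ?_
    rintro m ⟨p, q, c, hp, hq, hsupp, hx, rfl⟩
    obtain ⟨l, hlg, hle, hllen⟩ := upper_bound d Tu hTu x n p q c hn hp hq hsupp hx
    have : wlen Tu (x, n) ≤ l.length := Nat.sInf_le ⟨l, hlg, hle, rfl⟩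
    calc (wlen Tu (x, n) : ℤ) ≤ (l.length : ℤ) := by exact_mod_cast this
      _ = _ := hllen
  · -- sInf S ≤ wlen
    have hmem := Nat.sInf_mem hWne
    obtain ⟨l, hlg, hle, hllen⟩ := hmem
    obtain ⟨P, Q, c, hP, hQ, hmP, hmQ, hsupp, hsum, hlen⟩ := lower_bound d Tu hTu l hlg
    have hev : eval Tu l = (x, n) := hle
    rw [hev] at hmP hmQ hsum hlen
    simp only at hmP hmQ hsum hlen
    have hsubset : c.support ⊆ Finset.Icc (-P-1) Q :=
      fun j hj => Finset.mem_Icc.2 ⟨(hsupp j hj).1, (hsupp j hj).2⟩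
    have habs : (∑ j ∈ c.support, |c j|) = ∑ j ∈ Finset.Icc (-P-1) Q, |c j| := by
      refine Finset.sum_subset hsubset ?_
      intro j _ hj
      rw [Finsupp.notMem_support_iff.1 hj, abs_zero]
    have hxc : x = c.sum fun j cj => cj • Ev Tu j := by
      rw [Finsupp.sum_of_support_subset c hsubset (fun j cj => cj • Ev Tu j)
        (fun i _ => zero_smul ℤ (Ev Tu i)), ← hsum]
    have hmS : (2 * P + 2 * Q - n + ∑ j ∈ c.support, |c j|) ∈ S :=
      ⟨P, Q, c, hP, hmQ, hsupp, hxc, rfl⟩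
    have h1 : sInf S ≤ 2 * P + 2 * Q - n + ∑ j ∈ c.support, |c j| := csInf_le hSbdd hmS
    have h2 : (n.natAbs : ℤ) = n := by omega
    have hk : wlen Tu (x, n) = l.length := hllen.symm
    rw [habs] at *
    omega
end

section
/- If the coefficient c_i of a Laurent polynomial satisfies |c_i| = k+2 at an interior position with neighbors c_{i+1}, c_{i-1}, then after the rule-2 rewriting the change in Σ|c_j| is sign⁺(c_{i+1}·sign(c_i)) - 3 + sign⁺(c_{i-1}·sign(c_i)) < 0; in particular the sum of absolute values of coefficients strictly decreases. -/
/-- sign⁺(x) = 1 if x ≥ 0, -1 if x < 0. -/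
def signP (x : ℤ) : ℤ := if 0 ≤ x then 1 else -1

lemma abs_add_sign (a s : ℤ) (hs : s = 1 ∨ s = -1) :
    |a + s| - |a| = signP (s * a) := by
  rcases hs with rfl | rfl <;> unfold signP <;> split <;>
    simp only [Int.abs_eq_natAbs] at * <;> omega

theorem rule2_rewriting_length_change (k : ℤ) (hk : 2 ≤ k) (a b s c : ℤ)
    (hs : s = 1 ∨ s = -1) (hc : c = s * (k + 2)) :
    (|a + s| + |c - s * (2 * k + 1)| + |b + s|) - (|a| + |c| + |b|)
        = signP (s * a) - 3 + signP (s * b) ∧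
    |a + s| + |k + 2 - (2 * k + 1)| + |b + s| ≤ |a| + (k + 2) + |b| - 1 := by
  have hc1 : |c - s * (2 * k + 1)| = k - 1 := by
    subst hc; rcases hs with rfl | rfl <;> rw [abs_eq (by omega)] <;> omega
  have hc2 : |c| = k + 2 := by
    subst hc; rcases hs with rfl | rfl <;> rw [abs_eq (by omega)] <;> omega
  have ha := abs_add_sign a s hs
  have hb := abs_add_sign b s hs
  have h3 : |k + 2 - (2 * k + 1)| = k - 1 := by rw [abs_eq (by omega)]; omega
  have hsa : signP (s * a) ≤ 1 := by unfold signP; split <;> omega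
  have hsb : signP (s * b) ≤ 1 := by unfold signP; split <;> omega
  constructor
  · omega
  · omega
end

section
/- If P(X) = Σ_{i=0}^m c_i Xⁱ ∈ ℤ[X] is an n-reduced polynomial, then for every j with 0 ≤ j ≤ m, the truncation P_j(X) = Σ_{i=j}^m c_i Xⁱ is also n-reduced. -/
/-- Potential of the subword (c_j, …, c_l) (indices l ≤ j):
Pot = Σ_{l ≤ i ≤ j} ((2k-1) - 2|c_i|). -/
noncomputable def Pot (k : ℤ) (c : ℤ → ℤ) (l j : ℤ) : ℤ :=
  ∑ i ∈ Finset.Icc l j, ((2 * k - 1) - 2 * |c i|)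

/-- The polynomial with coefficients c (supported on [0,m], degree m) is n-reduced:
rules 1–6 of the paper. -/
def NReduced (k n m : ℤ) (c : ℤ → ℤ) : Prop :=
  -- Rule 1 (local top rule)
  (n ≤ m →
    |c m| ≤ k + 2 ∧ ((c m * c (m - 1)).sign < 0 → |c m| ≤ k + 1)) ∧
  -- Rule 2 (local non-top rule)
  (∀ i : ℤ, 0 ≤ i → ((i = m ∧ m < n) ∨ i < m) →
    |c i| ≤ k + 1 ∧
    (((c (i + 1) * c i).sign < 0 ∨ (c i * c (i - 1)).sign < 0) → |c i| ≤ k) ∧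
    (((c (i + 1) * c i).sign < 0 ∧ (c i * c (i - 1)).sign < 0) → |c i| ≤ k - 1)) ∧
  -- Rule 3 (local top rule)
  (n < m → ∀ ε : ℤ, (ε = 1 ∨ ε = -1) →
    ¬(c m = ε ∧ ε * c (m - 1) = -k) ∧
    ((c (m - 1) * c (m - 2)).sign < 0 → ¬(c m = ε ∧ ε * c (m - 1) = -k + 1))) ∧
  -- Rule 4 (global top rule)
  (n < m → ∀ i : ℤ, 1 ≤ i → ∀ ε : ℤ, (ε = 1 ∨ ε = -1) →
    c m = ε →
    (ε * c (m - 1) = -k + 1 ∨ ε * c (m - 1) = -k + 2) →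
    (∀ j : ℤ, 1 < j → j < i → (ε * c (m - j) = -k + 1 ∨ ε * c (m - j) = -k)) →
    (ε * c (m - i) = -k ∨ ε * c (m - i) = -k - 1) →
    (if 0 < c m * c (m - i - 1) then 2 ≤ Pot k c (m - i) (m - 1)
     else 0 < Pot k c (m - i) (m - 1))) ∧
  -- Rule 5 (global top rule)
  (n ≤ m → ∀ i : ℤ, 1 ≤ i → ∀ ε : ℤ, (ε = 1 ∨ ε = -1) →
    (ε * c m = k + 1 ∨ ε * c m = k + 2) →
    (∀ j : ℤ, 0 < j → j < i → (ε * c (m - j) = k - 1 ∨ ε * c (m - j) = k)) →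
    (ε * c (m - i) = k ∨ ε * c (m - i) = k + 1) →
    (if 0 ≤ c m * c (m - i - 1) then -6 < Pot k c (m - i) m
     else -4 ≤ Pot k c (m - i) m)) ∧
  -- Rule 6 (global non-top rule)
  (∀ l j : ℤ, 0 ≤ l → l < j → ((0 < j ∧ j < m) ∨ (0 < j ∧ j = m ∧ m < n)) →
    ∀ ε : ℤ, (ε = 1 ∨ ε = -1) →
    (ε * c j = k ∨ ε * c j = k + 1) →
    (ε * c l = k ∨ ε * c l = k + 1) →
    (∀ s : ℤ, l < s → s < j → (ε * c s = k - 1 ∨ ε * c s = k)) →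
    (if 0 ≤ c j * c (l - 1) then -3 - signP (c j * c (j + 1)) < Pot k c l j
     else -1 - signP (c j * c (j + 1)) ≤ Pot k c l j))


lemma Pot_congr {k : ℤ} {c c' : ℤ → ℤ} {l r : ℤ}
    (h : ∀ i, l ≤ i → i ≤ r → c' i = c i) : Pot k c' l r = Pot k c l r := by
  unfold Pot
  refine Finset.sum_congr rfl (fun i hi => ?_)
  rw [h i (Finset.mem_Icc.mp hi).1 (Finset.mem_Icc.mp hi).2]

theorem truncation_of_nReduced_is_nReduced (k n m : ℤ) (hk : 2 ≤ k) (hm : 0 ≤ m)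
    (c : ℤ → ℤ) (hsupp : ∀ i : ℤ, i < 0 ∨ m < i → c i = 0)
    (hred : NReduced k n m c) (j : ℤ) (hj0 : 0 ≤ j) (hjm : j ≤ m) :

    NReduced k n m (fun i => if j ≤ i then c i else 0) := by
  set d : ℤ → ℤ := fun i => if j ≤ i then c i else 0 with hd
  have hdeq : ∀ i : ℤ, j ≤ i → d i = c i := fun i hi => if_pos hi
  have hd0 : ∀ i : ℤ, i < j → d i = 0 := fun i hi => if_neg (not_le.mpr hi)
  obtain ⟨h1, h2, h3, h4, h5, h6⟩ := hred
  refine ⟨?_, ?_, ?_, ?_, ?_, ?_⟩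
  -- Rule 1
  · intro hn
    obtain ⟨a1, a2⟩ := h1 hn
    by_cases hc : j ≤ m - 1
    · rw [hdeq m hjm, hdeq (m-1) hc]; exact ⟨a1, a2⟩
    · rw [hdeq m hjm, hd0 (m-1) (by omega), mul_zero, Int.sign_zero]
      exact ⟨a1, fun h => absurd h (lt_irrefl 0)⟩
  -- Rule 2
  · intro i hi0 hicase
    by_cases hij : j ≤ i
    · obtain ⟨b1, b2, b3⟩ := h2 i hi0 hicase
      by_cases hij' : j ≤ i - 1
      · rw [hdeq i hij, hdeq (i+1) (by omega), hdeq (i-1) hij']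
        exact ⟨b1, b2, b3⟩
      · rw [hdeq i hij, hdeq (i+1) (by omega), hd0 (i-1) (by omega),
          mul_zero, Int.sign_zero]
        refine ⟨b1, ?_, ?_⟩
        · rintro (h | h)
          · exact b2 (Or.inl h)
          · exact absurd h (lt_irrefl 0)
        · rintro ⟨_, h⟩; exact absurd h (lt_irrefl 0)
    · rw [hd0 i (by omega)]
      refine ⟨by simp; omega, fun _ => by simp; omega, fun _ => by simp; omega⟩
  -- Rule 3
  · intro hn ε hε
    by_cases h2le : j ≤ m - 2
    · rw [hdeq m hjm, hdeq (m-1) (by omega), hdeq (m-2) h2le]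
      exact h3 hn ε hε
    · by_cases h1le : j ≤ m - 1
      · obtain ⟨g1, g2⟩ := h3 hn ε hε
        rw [hdeq m hjm, hdeq (m-1) h1le, hd0 (m-2) (by omega), mul_zero,
          Int.sign_zero]
        exact ⟨g1, fun h => absurd h (lt_irrefl 0)⟩
      · rw [hdeq m hjm, hd0 (m-1) (by omega)]
        constructor
        · rintro ⟨_, h⟩; rw [mul_zero] at h; omega
        · rintro _ ⟨_, h⟩; rw [mul_zero] at h; omega
  -- Rule 4
  · intro hn i hi ε hε hεm hεm1 hmid hmi
    have hji : j ≤ m - i := by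
      by_contra hcon
      push_neg at hcon
      rw [hd0 (m-i) (by omega), mul_zero] at hmi
      omega
    have e : ∀ x : ℤ, m - i ≤ x → d x = c x := fun x hx => hdeq x (by omega)
    rw [e m (by omega)] at hεm
    rw [e (m-1) (by omega)] at hεm1
    have hmid' : ∀ j' : ℤ, 1 < j' → j' < i →
        (ε * c (m - j') = -k + 1 ∨ ε * c (m - j') = -k) := fun j' ha hb => by
      rw [← e (m - j') (by omega)]; exact hmid j' ha hb
    rw [e (m-i) (by omega)] at hmi
    have hPot : Pot k d (m-i) (m-1) = Pot k c (m-i) (m-1) :=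
      Pot_congr (fun x hx _ => e x hx)
    have H := h4 hn i hi ε hε hεm hεm1 hmid' hmi
    by_cases hlast : j ≤ m - i - 1
    · rw [e m (by omega), hdeq (m-i-1) hlast, hPot]
      exact H
    · rw [e m (by omega), hd0 (m-i-1) (by omega), mul_zero,
        if_neg (lt_irrefl 0), hPot]
      split_ifs at H with hc
      · linarith
      · exact H
  -- Rule 5
  · intro hn i hi ε hε hεm hmid hmi
    have hji : j ≤ m - i := by
      by_contra hcon
      push_neg at hcon
      rw [hd0 (m-i) (by omega), mul_zero] at hmi
      omega
    have e : ∀ x : ℤ, m - i ≤ x → d x = c x := fun x hx => hdeq x (by omega)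
    rw [e m (by omega)] at hεm
    have hmid' : ∀ j' : ℤ, 0 < j' → j' < i →
        (ε * c (m - j') = k - 1 ∨ ε * c (m - j') = k) := fun j' ha hb => by
      rw [← e (m - j') (by omega)]; exact hmid j' ha hb
    rw [e (m-i) (by omega)] at hmi
    have hPot : Pot k d (m-i) m = Pot k c (m-i) m :=
      Pot_congr (fun x hx _ => e x hx)
    have H := h5 hn i hi ε hε hεm hmid' hmi
    by_cases hlast : j ≤ m - i - 1
    · rw [e m (by omega), hdeq (m-i-1) hlast, hPot]
      exact H
    · rw [e m (by omega), hd0 (m-i-1) (by omega), mul_zero,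
        if_pos (le_refl (0:ℤ)), hPot]
      split_ifs at H with hc
      · exact H
      · linarith
  -- Rule 6
  · intro l j' hl hlj hcase ε hε hεj hεl hmid
    have hjl : j ≤ l := by
      by_contra hcon
      push_neg at hcon
      rw [hd0 l (by omega), mul_zero] at hεl
      omega
    have e : ∀ x : ℤ, l ≤ x → d x = c x := fun x hx => hdeq x (by omega)
    rw [e j' (by omega)] at hεj
    rw [e l le_rfl] at hεl
    have hmid' : ∀ s : ℤ, l < s → s < j' →
        (ε * c s = k - 1 ∨ ε * c s = k) := fun s ha hb => by
      rw [← e s (by omega)]; exact hmid s ha hb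
    have hPot : Pot k d l j' = Pot k c l j' :=
      Pot_congr (fun x hx _ => e x hx)
    have H := h6 l j' hl hlj hcase ε hε hεj hεl hmid'
    by_cases hl1 : j ≤ l - 1
    · rw [e j' (by omega), e (j'+1) (by omega), hdeq (l-1) hl1, hPot]
      exact H
    · rw [e j' (by omega), e (j'+1) (by omega), hd0 (l-1) (by omega), mul_zero,
        if_pos (le_refl (0:ℤ)), hPot]
      split_ifs at H with hc
      · exact H
      · linarith
end

section
/- Let P ∈ ℤ[X] and n ∈ ℤ. Then P is n-reduced if and only if X·P(X) is (n+1)-reduced. -/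
/-- The coefficient function of an integer polynomial, indexed by ℤ. -/
noncomputable def cfun (P : Polynomial ℤ) : ℤ → ℤ :=
  fun i => if 0 ≤ i then P.coeff i.toNat else 0

lemma Pot_shift (k : ℤ) (c : ℤ → ℤ) (l j : ℤ) :
    Pot k (fun i => c (i - 1)) l j = Pot k c (l - 1) (j - 1) := by
  unfold Pot
  rw [show l - 1 = l + (-1) from by ring, show j - 1 = j + (-1) from by ring,
    ← Finset.map_add_right_Icc l j (-1), Finset.sum_map]
  apply Finset.sum_congr rfl
  intro x _
  congr 1

lemma nreduced_zero (k : ℤ) (hk : 2 ≤ k) (n m : ℤ) : NReduced k n m (fun _ => 0) := by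
  refine ⟨?_, ?_, ?_, ?_, ?_, ?_⟩
  · intro _
    constructor
    · simp; omega
    · intro h; simp at h
  · intro i _ _
    refine ⟨by simp; omega, fun h => ?_, fun h => ?_⟩ <;> simp at h ⊢ <;> omega
  · intro _ ε hε
    constructor
    · rintro ⟨h, -⟩; simp at h; omega
    · intro _; rintro ⟨h, -⟩; simp at h; omega
  · intro _ i _ ε hε hcm _ _ _
    simp at hcm; omega
  · intro _ i _ ε hε hcm _ _
    simp only [mul_zero] at hcm; omega
  · intro l j _ _ _ ε hε hj _ _
    simp only [mul_zero] at hj; omega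

lemma arith1 : ∀ x : ℤ, x + 1 - 1 = x := fun x => by ring
lemma arith2 : ∀ x : ℤ, x + 1 - 2 = x - 1 := fun x => by ring
lemma arith3 : ∀ x y : ℤ, x + 1 - y - 1 = x - y := fun x y => by ring
lemma arith4 : ∀ x : ℤ, x - 1 + 1 = x := fun x => by ring
lemma arith5 : ∀ x : ℤ, x - 1 - 1 = x - 2 := fun x => by ring

lemma shift_iff (k : ℤ) (hk : 2 ≤ k) (n m : ℤ) (c : ℤ → ℤ)
    (hc : ∀ i : ℤ, i < 0 → c i = 0) :
    NReduced k n m c ↔ NReduced k (n + 1) (m + 1) (fun i => c (i - 1)) := by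
  constructor
  · rintro ⟨h1, h2, h3, h4, h5, h6⟩
    refine ⟨?_, ?_, ?_, ?_, ?_, ?_⟩
    · intro hnm
      have := h1 (by omega)
      simpa only [arith1, arith2, arith3, arith4, arith5] using this
    · intro i hi hcond
      rcases eq_or_lt_of_le hi with rfl | hi'
      · have h0 : c (0 - 1) = 0 := hc _ (by omega)
        simp only [h0]
        refine ⟨by simp; omega, fun _ => by simp; omega, fun _ => by simp; omega⟩
      · have := h2 (i - 1) (by omega) (by omega)
        simpa only [arith1, arith2, arith3, arith4, arith5] using this
    · intro hnm ε hε
      have := h3 (by omega) ε hε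
      simpa only [arith1, arith2, arith3, arith4, arith5] using this
    · intro hnm i hi ε hε hcm hcm1 hjs hci
      simp only [arith1, arith2, arith3, arith4, arith5] at hcm hcm1 hjs hci
      have := h4 (by omega) i hi ε hε hcm hcm1 hjs hci
      simp only [Pot_shift, arith1, arith2, arith3, arith4, arith5]
      exact this
    · intro hnm i hi ε hε hcm hjs hci
      simp only [arith1, arith2, arith3, arith4, arith5] at hcm hjs hci
      have := h5 (by omega) i hi ε hε hcm hjs hci
      simp only [Pot_shift, arith1, arith2, arith3, arith4, arith5]
      exact this
    · intro l j hl hlj hcond ε hε hcj hcl hs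
      rcases eq_or_lt_of_le hl with rfl | hl'
      · exfalso
        have h0 : c (0 - 1) = 0 := hc _ (by omega)
        simp only [h0, mul_zero] at hcl
        omega
      · simp only [arith1, arith2, arith3, arith4, arith5] at hcj hcl hs
        have := h6 (l - 1) (j - 1) (by omega) (by omega) (by omega) ε hε hcj hcl
          (fun s hs1 hs2 => by
            have := hs (s + 1) (by omega) (by omega)
            simpa only [arith1] using this)
        simp only [Pot_shift, arith1, arith2, arith3, arith4, arith5]
        simpa only [arith4, arith5] using this
  · rintro ⟨h1, h2, h3, h4, h5, h6⟩
    refine ⟨?_, ?_, ?_, ?_, ?_, ?_⟩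
    · intro hnm
      have := h1 (by omega)
      simpa only [arith1, arith2, arith3, arith4, arith5] using this
    · intro i hi hcond
      have := h2 (i + 1) (by omega) (by omega)
      simpa only [arith1, arith2, arith3, arith4, arith5] using this
    · intro hnm ε hε
      have := h3 (by omega) ε hε
      simpa only [arith1, arith2, arith3, arith4, arith5] using this
    · intro hnm i hi ε hε hcm hcm1 hjs hci
      have := h4 (by omega) i hi ε hε (by simpa only [arith1, arith2, arith3] using hcm)
        (by simpa only [arith1, arith2, arith3] using hcm1)
        (fun j hj1 hj2 => by simpa only [arith1, arith2, arith3] using hjs j hj1 hj2)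
        (by simpa only [arith1, arith2, arith3] using hci)
      simp only [Pot_shift, arith1, arith2, arith3, arith4, arith5] at this
      exact this
    · intro hnm i hi ε hε hcm hjs hci
      have := h5 (by omega) i hi ε hε (by simpa only [arith1, arith2, arith3] using hcm)
        (fun j hj1 hj2 => by simpa only [arith1, arith2, arith3] using hjs j hj1 hj2)
        (by simpa only [arith1, arith2, arith3] using hci)
      simp only [Pot_shift, arith1, arith2, arith3, arith4, arith5] at this
      exact this
    · intro l j hl hlj hcond ε hε hcj hcl hs
      have := h6 (l + 1) (j + 1) (by omega) (by omega) (by omega) ε hε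
        (by simpa only [arith1, arith2, arith3] using hcj)
        (by simpa only [arith1, arith2, arith3] using hcl)
        (fun s hs1 hs2 => by
          have := hs (s - 1) (by omega) (by omega)
          simpa only [arith1] using this)
      simp only [Pot_shift, arith1, arith2, arith3, arith4, arith5] at this
      exact this

lemma cfun_X_mul (P : Polynomial ℤ) :
    cfun (Polynomial.X * P) = fun i => cfun P (i - 1) := by
  funext i
  unfold cfun
  rcases lt_trichotomy i 0 with h | rfl | h
  · rw [if_neg (by omega), if_neg (by omega)]
  · rw [if_pos le_rfl, if_neg (by omega)]
    simp [Polynomial.mul_coeff_zero]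
  · rw [if_pos (by omega), if_pos (by omega)]
    have : i.toNat = (i - 1).toNat + 1 := by omega
    rw [this, Polynomial.coeff_X_mul]

lemma cfun_neg (P : Polynomial ℤ) : ∀ i : ℤ, i < 0 → cfun P i = 0 := by
  intro i hi
  unfold cfun
  rw [if_neg (by omega)]

theorem nReduced_iff_mul_X_succ_reduced (k : ℤ) (hk : 2 ≤ k) (n : ℤ) (P : Polynomial ℤ) :
    NReduced k n (P.natDegree : ℤ) (cfun P) ↔
      NReduced k (n + 1) ((Polynomial.X * P).natDegree : ℤ) (cfun (Polynomial.X * P)) := by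
  by_cases hP : P = 0
  · subst hP
    rw [mul_zero]
    have h0 : cfun (0 : Polynomial ℤ) = fun _ => 0 := by
      funext i; unfold cfun; simp
    rw [h0]
    exact ⟨fun _ => nreduced_zero k hk _ _, fun _ => nreduced_zero k hk _ _⟩
  · rw [cfun_X_mul, Polynomial.natDegree_X_mul hP]
    push_cast
    exact shift_iff k hk n _ (cfun P) (cfun_neg P)
end

section
/- (Spanning lemma) Let G = ⟨a,b⟩ be free abelian of rank 2. Suppose (g_i)_{i≥0} is a sequence in G with g_0 = 0, g_1 = b, g_{i+1} - g_i ∈ {b, b-a, -a} for all i, and whenever g_{i+1} - g_i ∈ {b-a, -a}, then g_{i+2} - g_{i+1} = g_{i+3} - g_{i+2} = b. Define h_i by swapping coordinates: if g_i = k·a + t·b then h_i = t·a + k·b. Then for every γ ∈ G there exist i, j ∈ ℕ and signs ε, δ ∈ {±1} with γ = ε·g_i + δ·h_j. -/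
private lemma ivt_aux (f : ℕ → ℤ) (c : ℤ) (hstep : ∀ k, f (k+1) ≤ f k + 1) :
    ∀ n, f 0 ≤ c → c ≤ f n → ∃ k, k ≤ n ∧ f k = c := by
  intro n
  induction n with
  | zero => exact fun h0 hn => ⟨0, le_rfl, le_antisymm h0 hn⟩
  | succ n ih =>
    intro h0 hn
    by_cases hc : c ≤ f n
    · obtain ⟨k, hk, hfk⟩ := ih h0 hc
      exact ⟨k, hk.trans (Nat.le_succ n), hfk⟩
    · exact ⟨n+1, le_rfl, le_antisymm (by have := hstep n; omega) hn⟩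

theorem spanning_lemma (g : ℕ → ℤ × ℤ)
    (h0 : g 0 = 0) (h1 : g 1 = (0, 1))
    (hstep : ∀ i, g (i + 1) - g i = (0, 1) ∨ g (i + 1) - g i = (-1, 1) ∨
      g (i + 1) - g i = (-1, 0))
    (hfollow : ∀ i, (g (i + 1) - g i = (-1, 1) ∨ g (i + 1) - g i = (-1, 0)) →
      g (i + 2) - g (i + 1) = (0, 1) ∧ g (i + 3) - g (i + 2) = (0, 1)) :
    ∀ γ : ℤ × ℤ, ∃ (i j : ℕ) (ε δ : ℤ), (ε = 1 ∨ ε = -1) ∧ (δ = 1 ∨ δ = -1) ∧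
      γ = ε • g i + δ • Prod.swap (g j) := by
  have hx0 : (g 0).1 = 0 := by rw [h0]; rfl
  have hy0 : (g 0).2 = 0 := by rw [h0]; rfl
  have hx1 : (g 1).1 = 0 := by rw [h1]
  have hy1 : (g 1).2 = 1 := by rw [h1]
  -- coordinate form of the step hypothesis
  have coord : ∀ i, ((g (i+1)).1 = (g i).1 ∧ (g (i+1)).2 = (g i).2 + 1)
      ∨ ((g (i+1)).1 = (g i).1 - 1 ∧ (g (i+1)).2 = (g i).2 + 1)
      ∨ ((g (i+1)).1 = (g i).1 - 1 ∧ (g (i+1)).2 = (g i).2) := by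
    intro i
    rcases hstep i with h | h | h <;>
    · have hA := congrArg Prod.fst h
      have hB := congrArg Prod.snd h
      simp only [Prod.fst_sub, Prod.snd_sub] at hA hB
      first
      | exact Or.inl ⟨by omega, by omega⟩
      | exact Or.inr (Or.inl ⟨by omega, by omega⟩)
      | exact Or.inr (Or.inr ⟨by omega, by omega⟩)
  -- after a non-vertical step, the next two steps are vertical
  have upfol : ∀ i, (g (i+1)).1 ≠ (g i).1 →
      ((g (i+2)).1 = (g (i+1)).1 ∧ (g (i+2)).2 = (g (i+1)).2 + 1) ∧
      ((g (i+3)).1 = (g (i+2)).1 ∧ (g (i+3)).2 = (g (i+2)).2 + 1) := by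
    intro i hne
    have hin : g (i+1) - g i = (-1, 1) ∨ g (i+1) - g i = (-1, 0) := by
      rcases hstep i with h | h | h
      · exfalso
        apply hne
        have hA := congrArg Prod.fst h
        simp only [Prod.fst_sub] at hA
        omega
      · exact Or.inl h
      · exact Or.inr h
    obtain ⟨e2, e3⟩ := hfollow i hin
    have A1 := congrArg Prod.fst e2
    have A2 := congrArg Prod.snd e2
    have B1 := congrArg Prod.fst e3
    have B2 := congrArg Prod.snd e3
    simp only [Prod.fst_sub, Prod.snd_sub] at A1 A2 B1 B2
    exact ⟨⟨by omega, by omega⟩, ⟨by omega, by omega⟩⟩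
  have xstep : ∀ i, (g (i+1)).1 ≤ (g i).1 ∧ (g i).1 - 1 ≤ (g (i+1)).1 := by
    intro i; rcases coord i with h | h | h <;> omega
  have ystep : ∀ i, (g i).2 ≤ (g (i+1)).2 ∧ (g (i+1)).2 ≤ (g i).2 + 1 := by
    intro i; rcases coord i with h | h | h <;> omega
  have ymono' : ∀ i j : ℕ, i ≤ j → (g i).2 ≤ (g j).2 := by
    intro i j hij
    induction j, hij using Nat.le_induction with
    | base => exact le_rfl
    | succ n hn ih => exact ih.trans (ystep n).1
  have xmono' : ∀ i j : ℕ, i ≤ j → (g j).1 ≤ (g i).1 := by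
    intro i j hij
    induction j, hij using Nat.le_induction with
    | base => exact le_rfl
    | succ n hn ih => exact (xstep n).1.trans ih
  have xle0 : ∀ i, (g i).1 ≤ 0 := by
    intro i; have := xmono' 0 i (Nat.zero_le i); omega
  have yge0 : ∀ i, 0 ≤ (g i).2 := by
    intro i; have := ymono' 0 i (Nat.zero_le i); omega
  -- the slope invariant: 2 * (-x i) ≤ y i + 1
  have hQ : ∀ i, 0 ≤ (g i).2 + 1 + 2 * (g i).1 ∧
      ((g (i+1)).1 ≠ (g i).1 → 2 ≤ (g i).2 + 1 + 2 * (g i).1) ∧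
      ((g (i+2)).1 ≠ (g (i+1)).1 → 1 ≤ (g i).2 + 1 + 2 * (g i).1) := by
    intro i
    induction i with
    | zero =>
      refine ⟨by omega, fun hne => ?_, fun _ => by omega⟩
      exfalso; exact hne (by show (g 1).1 = (g 0).1; omega)
    | succ n ih =>
      obtain ⟨a, b, c⟩ := ih
      have hcn := coord n
      rcases hcn with h | h | h
      · refine ⟨by omega, ?_, ?_⟩
        · show (g (n+2)).1 ≠ (g (n+1)).1 → 2 ≤ (g (n+1)).2 + 1 + 2 * (g (n+1)).1
          intro hne
          have := c hne
          omega
        · intro _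
          omega
      · have hb := b (by omega)
        refine ⟨by omega, ?_, ?_⟩
        · show (g (n+2)).1 ≠ (g (n+1)).1 → 2 ≤ (g (n+1)).2 + 1 + 2 * (g (n+1)).1
          intro hne
          exact absurd (upfol n (by omega)).1.1 hne
        · show (g (n+3)).1 ≠ (g (n+2)).1 → 1 ≤ (g (n+1)).2 + 1 + 2 * (g (n+1)).1
          intro hne
          exact absurd (upfol n (by omega)).2.1 hne
      · have hb := b (by omega)
        refine ⟨by omega, ?_, ?_⟩
        · show (g (n+2)).1 ≠ (g (n+1)).1 → 2 ≤ (g (n+1)).2 + 1 + 2 * (g (n+1)).1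
          intro hne
          exact absurd (upfol n (by omega)).1.1 hne
        · show (g (n+3)).1 ≠ (g (n+2)).1 → 1 ≤ (g (n+1)).2 + 1 + 2 * (g (n+1)).1
          intro hne
          exact absurd (upfol n (by omega)).2.1 hne
  have hbound : ∀ i, -2 * (g i).1 ≤ (g i).2 + 1 := by
    intro i; have := (hQ i).1; omega
  -- growth of y
  have growth : ∀ k : ℕ, (k:ℤ) ≤ (g (2*k)).2 := by
    intro k
    induction k with
    | zero =>
      simp only [Nat.mul_zero, Nat.cast_zero]
      exact yge0 0
    | succ n ih =>
      have e : 2*(n+1) = 2*n+2 := by ring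
      rw [e]
      have hy2' := ystep (2*n+1)
      rw [show 2*n+1+1 = 2*n+2 from rfl] at hy2'
      rcases coord (2*n) with h | h | h
      · push_cast; omega
      · push_cast; omega
      · have hu := (upfol (2*n) (by omega)).1.2
        rw [show 2*n+2 = 2*n+1+1 from rfl] at hu
        rw [show 2*n+1+1 = 2*n+2 from rfl] at hu
        push_cast; omega
  have heightbound : ∀ (t i : ℕ), (g i).2 = (t:ℤ) → i ≤ 2*t+1 := by
    intro t i hi
    by_contra hcon
    push_neg at hcon
    have h1' : 2*(t+1) ≤ i := by omega
    have h2' := ymono' _ _ h1'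
    have h3' := growth (t+1)
    push_cast at h3'
    omega
  set I : ℕ → ℕ := fun t => Nat.findGreatest (fun i => (g i).2 = (t : ℤ)) (2*t+1) with hIdef
  have hIy : ∀ t : ℕ, (g (I t)).2 = (t:ℤ) := by
    intro t
    obtain ⟨i, hile, hi⟩ := ivt_aux (fun i => (g i).2) (t:ℤ) (fun k => (ystep k).2) (2*t)
      (by show (g 0).2 ≤ (t:ℤ); omega) (growth t)
    have hi' : (g i).2 = (t:ℤ) := hi
    have hspec := Nat.findGreatest_spec (P := fun i => (g i).2 = (t:ℤ)) (m := i)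
      (n := 2*t+1) (by omega) hi'
    rw [hIdef]
    exact hspec
  have hImax : ∀ (t i : ℕ), (g i).2 = (t:ℤ) → i ≤ I t := by
    intro t i hi
    rw [hIdef]
    exact Nat.le_findGreatest (heightbound t i hi) hi
  have hIuniq : ∀ (s k : ℕ), (g k).2 = (s:ℤ) → (g (k+1)).2 = (s:ℤ) + 1 → I s = k := by
    intro s k hk hk1
    refine le_antisymm ?_ (hImax s k hk)
    by_contra hcon
    push_neg at hcon
    have h1' : k + 1 ≤ I s := hcon
    have h2' := ymono' _ _ h1'
    have h3' := hIy s
    omega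
  have hφle : ∀ t : ℕ, (g (I t)).1 ≤ 0 := fun t => xle0 _
  have hφbd : ∀ t : ℕ, -2 * (g (I t)).1 ≤ (t:ℤ) + 1 := by
    intro t
    have h' := hbound (I t)
    have h'' := hIy t
    omega
  have hI0 : I 0 = 0 := by
    refine hIuniq 0 0 (by omega) ?_
    show (g 1).2 = ((0:ℕ):ℤ) + 1
    omega
  have hφ0 : (g (I 0)).1 = 0 := by rw [hI0]; exact hx0
  -- the key step property of φ
  have hφstep : ∀ t : ℕ, (g (I (t+1))).1 = (g (I t)).1 ∨
      (g (I (t+1))).1 = (g (I t)).1 - 1 := by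
    intro t
    have hyt := hIy t
    have hyt1 : (g (I t + 1)).2 = (t:ℤ) + 1 := by
      rcases coord (I t) with h | h | h
      · omega
      · omega
      · exfalso
        have hle : I t + 1 ≤ I t := hImax t (I t + 1) (by omega)
        omega
    rcases coord (I t) with h | h | h
    · rcases coord (I t + 1) with h2 | h2 | h2 <;>
        rw [show I t + 1 + 1 = I t + 2 from rfl] at h2
      · have hIe : I (t+1) = I t + 1 :=
          hIuniq (t+1) (I t + 1) (by push_cast; omega)
            (by show (g (I t + 2)).2 = ((t:ℤ)+1) + 1; omega)
        rw [hIe]; omega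
      · have hIe : I (t+1) = I t + 1 :=
          hIuniq (t+1) (I t + 1) (by push_cast; omega)
            (by show (g (I t + 2)).2 = ((t:ℤ)+1) + 1; omega)
        rw [hIe]; omega
      · have hup := upfol (I t + 1)
          (by rw [show I t + 1 + 1 = I t + 2 from rfl]; omega)
        rw [show I t + 1 + 2 = I t + 3 from rfl] at hup
        rw [show I t + 1 + 3 = I t + 4 from rfl] at hup
        rw [show I t + 1 + 1 = I t + 2 from rfl] at hup
        have hIe : I (t+1) = I t + 2 := by
          refine hIuniq (t+1) (I t + 2) (by push_cast; omega) ?_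
          show (g (I t + 3)).2 = ((t:ℤ)+1) + 1
          have := hup.1.2
          omega
        rw [hIe]
        omega
    · have hup := upfol (I t) (by omega)
      have hIe : I (t+1) = I t + 1 := by
        refine hIuniq (t+1) (I t + 1) (by push_cast; omega) ?_
        show (g (I t + 2)).2 = ((t:ℤ)+1) + 1
        have := hup.1.2
        omega
      rw [hIe]; omega
    · exfalso; omega
  -- Engine V : representation γ = g i + swap (g j)
  have lemV : ∀ p q : ℤ, 0 ≤ q → (g (I (q.toNat))).1 ≤ p →
      ∃ i j : ℕ, (p, q) = g i + Prod.swap (g j) := by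
    intro p q hq hV0
    set f : ℕ → ℤ := fun j => (g (I ((q - (g j).1).toNat))).1 + (g j).2 with hf
    have hfstep : ∀ k, f (k+1) ≤ f k + 1 := by
      intro k
      have hxs := xstep k
      have hys := ystep k
      have hx := xle0 k
      have hx1' := xle0 (k+1)
      have hsplit : (q - (g (k+1)).1).toNat = (q - (g k).1).toNat ∨
          (q - (g (k+1)).1).toNat = (q - (g k).1).toNat + 1 := by omega
      rcases hsplit with hs | hs
      · show (g (I ((q - (g (k+1)).1).toNat))).1 + (g (k+1)).2 ≤
          (g (I ((q - (g k).1).toNat))).1 + (g k).2 + 1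
        rw [hs]; omega
      · show (g (I ((q - (g (k+1)).1).toNat))).1 + (g (k+1)).2 ≤
          (g (I ((q - (g k).1).toNat))).1 + (g k).2 + 1
        rw [hs]
        have := hφstep ((q - (g k).1).toNat)
        omega
    have hf0 : f 0 ≤ p := by
      show (g (I ((q - (g 0).1).toNat))).1 + (g 0).2 ≤ p
      rw [show (q - (g 0).1).toNat = q.toNat by omega]
      omega
    obtain ⟨t0, ht0⟩ : ∃ t0 : ℕ, (t0:ℤ) = 4 * p.natAbs + 2 * q.natAbs + 3 :=
      ⟨4 * p.natAbs + 2 * q.natAbs + 3, by push_cast; ring⟩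
    have hlarge : p ≤ f (I t0) := by
      show p ≤ (g (I ((q - (g (I t0)).1).toNat))).1 + (g (I t0)).2
      have hyn := hIy t0
      have hXle := hφle t0
      have hXbd := hφbd t0
      have hbd2 := hφbd ((q - (g (I t0)).1).toNat)
      have hle2 := hφle ((q - (g (I t0)).1).toNat)
      omega
    obtain ⟨j, _, hj⟩ := ivt_aux f p hfstep (I t0) hf0 hlarge
    refine ⟨I ((q - (g j).1).toNat), j, ?_⟩
    have hyi := hIy ((q - (g j).1).toNat)
    have hxj := xle0 j
    have hji : (g (I ((q - (g j).1).toNat))).1 + (g j).2 = p := hj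
    rw [Prod.ext_iff]
    simp only [Prod.fst_add, Prod.snd_add, Prod.fst_swap, Prod.snd_swap]
    constructor <;> omega
  -- Engine W : representation γ = -g i - swap (g j)
  have lemW : ∀ p q : ℤ, p ≤ 0 → q ≤ -(g (I ((-p).toNat))).1 →
      ∃ i j : ℕ, (p, q) = -g i - Prod.swap (g j) := by
    intro p q hp hq0
    set f : ℕ → ℤ := fun i => (g i).2 + (g (I ((-p - (g i).1).toNat))).1 with hf
    have hfstep : ∀ k, f (k+1) ≤ f k + 1 := by
      intro k
      have hxs := xstep k
      have hys := ystep k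
      have hx := xle0 k
      have hx1' := xle0 (k+1)
      have hsplit : (-p - (g (k+1)).1).toNat = (-p - (g k).1).toNat ∨
          (-p - (g (k+1)).1).toNat = (-p - (g k).1).toNat + 1 := by omega
      rcases hsplit with hs | hs
      · show (g (k+1)).2 + (g (I ((-p - (g (k+1)).1).toNat))).1 ≤
          (g k).2 + (g (I ((-p - (g k).1).toNat))).1 + 1
        rw [hs]; omega
      · show (g (k+1)).2 + (g (I ((-p - (g (k+1)).1).toNat))).1 ≤
          (g k).2 + (g (I ((-p - (g k).1).toNat))).1 + 1
        rw [hs]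
        have := hφstep ((-p - (g k).1).toNat)
        omega
    have hf0 : f 0 ≤ -q := by
      show (g 0).2 + (g (I ((-p - (g 0).1).toNat))).1 ≤ -q
      rw [show (-p - (g 0).1).toNat = (-p).toNat by omega]
      omega
    obtain ⟨t0, ht0⟩ : ∃ t0 : ℕ, (t0:ℤ) = 4 * q.natAbs + 2 * p.natAbs + 3 :=
      ⟨4 * q.natAbs + 2 * p.natAbs + 3, by push_cast; ring⟩
    have hlarge : -q ≤ f (I t0) := by
      show -q ≤ (g (I t0)).2 + (g (I ((-p - (g (I t0)).1).toNat))).1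
      have hyn := hIy t0
      have hXbd := hφbd t0
      have hXle := hφle t0
      have h2 := hφbd ((-p - (g (I t0)).1).toNat)
      have h3 := hφle ((-p - (g (I t0)).1).toNat)
      omega
    obtain ⟨k, _, hk⟩ := ivt_aux f (-q) hfstep (I t0) hf0 hlarge
    refine ⟨k, I ((-p - (g k).1).toNat), ?_⟩
    have hyj := hIy ((-p - (g k).1).toNat)
    have hk' : (g k).2 + (g (I ((-p - (g k).1).toNat))).1 = -q := hk
    have hxk := xle0 k
    rw [Prod.ext_iff]
    simp only [Prod.fst_sub, Prod.snd_sub, Prod.fst_neg, Prod.snd_neg,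
      Prod.fst_swap, Prod.snd_swap]
    constructor <;> omega
  -- the second quadrant : p ≤ 0 ≤ q
  have q2 : ∀ p q : ℤ, p ≤ 0 → 0 ≤ q →
      ∃ (i j : ℕ) (ε δ : ℤ), (ε = 1 ∨ ε = -1) ∧ (δ = 1 ∨ δ = -1) ∧
        (p, q) = ε • g i + δ • Prod.swap (g j) := by
    intro p q hp hq
    by_cases hWc : q ≤ -(g (I ((-p).toNat))).1
    · obtain ⟨i, j, hij⟩ := lemW p q hp hWc
      refine ⟨i, j, -1, -1, Or.inr rfl, Or.inr rfl, ?_⟩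
      rw [hij, neg_one_smul, neg_one_smul, sub_eq_add_neg]
    · push_neg at hWc
      set f : ℕ → ℤ := fun i => (g i).2 - (g (I (((g i).1 - p).toNat))).1 with hf
      have hfstep : ∀ k, f (k+1) ≤ f k + 1 := by
        intro k
        have hxs := xstep k
        have hys := ystep k
        have hsplit : ((g (k+1)).1 - p).toNat = ((g k).1 - p).toNat ∨
            ((g k).1 - p).toNat = ((g (k+1)).1 - p).toNat + 1 := by omega
        rcases hsplit with hs | hs
        · show (g (k+1)).2 - (g (I (((g (k+1)).1 - p).toNat))).1 ≤
            (g k).2 - (g (I (((g k).1 - p).toNat))).1 + 1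
          rw [hs]; omega
        · show (g (k+1)).2 - (g (I (((g (k+1)).1 - p).toNat))).1 ≤
            (g k).2 - (g (I (((g k).1 - p).toNat))).1 + 1
          rw [hs]
          have := hφstep (((g (k+1)).1 - p).toNat)
          omega
      have hf0 : f 0 ≤ q := by
        show (g 0).2 - (g (I (((g 0).1 - p).toNat))).1 ≤ q
        rw [show ((g 0).1 - p).toNat = (-p).toNat by omega]
        omega
      have hrepr : ∀ k : ℕ, p ≤ (g k).1 →
          (g k).2 - (g (I (((g k).1 - p).toNat))).1 = q →
          ∃ (i j : ℕ) (ε δ : ℤ), (ε = 1 ∨ ε = -1) ∧ (δ = 1 ∨ δ = -1) ∧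
            (p, q) = ε • g i + δ • Prod.swap (g j) := by
        intro k hpk hk
        refine ⟨k, I (((g k).1 - p).toNat), 1, -1, Or.inl rfl, Or.inr rfl, ?_⟩
        have hyj := hIy (((g k).1 - p).toNat)
        rw [Prod.ext_iff]
        simp only [Prod.fst_add, Prod.snd_add, Prod.smul_fst, Prod.smul_snd,
          Prod.fst_swap, Prod.snd_swap, smul_eq_mul]
        constructor <;> omega
      by_cases hbdd : ∀ i : ℕ, p ≤ (g i).1
      · have hlarge : q ≤ f (I (q.toNat)) := by
          show q ≤ (g (I q.toNat)).2 - (g (I (((g (I q.toNat)).1 - p).toNat))).1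
          have h1' := hIy (q.toNat)
          have h2' := hφle (((g (I q.toNat)).1 - p).toNat)
          omega
        obtain ⟨k, _, hk⟩ := ivt_aux f q hfstep _ hf0 hlarge
        exact hrepr k (hbdd k) hk
      · push_neg at hbdd
        have hex : ∃ i, (g i).1 < p := hbdd
        have hm1 : (g (Nat.find hex)).1 < p := Nat.find_spec hex
        set m := Nat.find hex with hm
        have hmin : ∀ i, i < m → p ≤ (g i).1 := by
          intro i hi
          have := Nat.find_min hex hi
          omega
        have hmpos : 1 ≤ m := by
          rcases Nat.eq_zero_or_pos m with hmz | hmz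
          · rw [hmz] at hm1; omega
          · exact hmz
        by_cases hreach : ∃ k, k ≤ m - 1 ∧ q ≤ f k
        · obtain ⟨k0, hk0m, hk0⟩ := hreach
          obtain ⟨k, hkk0, hk⟩ := ivt_aux f q hfstep k0 hf0 hk0
          exact hrepr k (hmin k (by omega)) hk
        · push_neg at hreach
          have hfm : f (m-1) < q := hreach (m-1) le_rfl
          have hxm1 : p ≤ (g (m-1)).1 := hmin _ (by omega)
          have hxm1' : (g (m-1)).1 = p := by
            have hxs := xstep (m-1)
            rw [show m - 1 + 1 = m by omega] at hxs
            omega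
          have hym1 : (g (m-1)).2 < q := by
            have hfm' : (g (m-1)).2 - (g (I (((g (m-1)).1 - p).toNat))).1 < q := hfm
            rw [hxm1'] at hfm'
            rw [show (p - p).toNat = 0 by omega] at hfm'
            rw [hφ0] at hfm'
            omega
          have hIq : m ≤ I (q.toNat) := by
            by_contra hcon
            push_neg at hcon
            have h1' : I (q.toNat) ≤ m - 1 := by omega
            have h2' := ymono' _ _ h1'
            have h3' := hIy (q.toNat)
            omega
          have hfin : (g (I (q.toNat))).1 ≤ p := by
            have := xmono' m (I (q.toNat)) hIq
            omega
          obtain ⟨i, j, hij⟩ := lemV p q hq hfin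
          exact ⟨i, j, 1, 1, Or.inl rfl, Or.inl rfl, by rw [hij, one_smul, one_smul]⟩
  -- final assembly
  intro γ
  obtain ⟨p, q⟩ := γ
  rcases le_total 0 p with hp | hp <;> rcases le_total 0 q with hq | hq
  · obtain ⟨i, j, hij⟩ := lemV p q hq (le_trans (hφle _) hp)
    exact ⟨i, j, 1, 1, Or.inl rfl, Or.inl rfl, by rw [hij, one_smul, one_smul]⟩
  · obtain ⟨i, j, ε, δ, hε, hδ, hqp⟩ := q2 q p hq hp
    refine ⟨j, i, δ, ε, hδ, hε, ?_⟩
    rw [Prod.ext_iff] at hqp ⊢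
    simp only [Prod.fst_add, Prod.snd_add, Prod.smul_fst, Prod.smul_snd, smul_eq_mul,
      Prod.fst_swap, Prod.snd_swap] at hqp ⊢
    exact ⟨by linarith [hqp.2], by linarith [hqp.1]⟩
  · exact q2 p q hp hq
  · obtain ⟨i, j, hij⟩ := lemV (-p) (-q) (by omega) (le_trans (hφle _) (by omega))
    refine ⟨i, j, -1, -1, Or.inr rfl, Or.inr rfl, ?_⟩
    rw [Prod.ext_iff] at hij ⊢
    simp only [Prod.fst_add, Prod.snd_add, Prod.smul_fst, Prod.smul_snd, smul_eq_mul,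
      Prod.fst_swap, Prod.snd_swap, Prod.fst_neg, Prod.snd_neg] at hij ⊢
    constructor <;> omega
end
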